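/- arXiv:2210.00885 — 5 statements merged into one kernel-verified Lean document; each statement's English description precedes it below -/
import Mathlib

section
/- For every probability density f on the real line, the square of the essential supremum of f times the second moment of f is at least 1/12: ‖f‖_∞² · ∫ t² f(t) dt ≥ 1/12. -/
open MeasureTheory ENNReal

/-- Moriguti's inequality: for every probability density `f` on the real line,
`‖f‖_∞² · ∫ t² f(t) dt ≥ 1/12` (the second moment may be infinite). -/
theorem density_sup_sq_mul_second_moment_ge
    (f : ℝ → ℝ) (hmeas : Measurable f) (hnonneg : ∀ t, 0 ≤ f t)
    (hdens : ∫⁻ t, ENNReal.ofReal (f t) = 1) :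
    (1 : ℝ≥0∞) / 12 ≤
      (eLpNorm f ⊤ volume) ^ 2 * ∫⁻ t, ENNReal.ofReal (t ^ 2 * f t) := by
  set g : ℝ → ℝ≥0∞ := fun t => ENNReal.ofReal (f t) with hgdef
  have hg : Measurable g := hmeas.ennreal_ofReal
  set M : ℝ≥0∞ := eLpNorm f ⊤ volume with hMdef
  set I : ℝ≥0∞ := ∫⁻ t, ENNReal.ofReal (t ^ 2 * f t) with hIdef
  have hh : Measurable fun t : ℝ => ENNReal.ofReal (t ^ 2 * f t) :=
    (((measurable_id.pow_const 2).mul hmeas)).ennreal_ofReal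
  have hgM : ∀ᵐ t, g t ≤ M := by
    have h := ae_le_eLpNormEssSup (f := f) (μ := volume)
    rw [hMdef, eLpNorm_exponent_top]
    filter_upwards [h] with t ht
    show ENNReal.ofReal (f t) ≤ _
    rwa [← Real.enorm_eq_ofReal (hnonneg t)]
  -- I ≠ 0
  have hI0 : I ≠ 0 := by
    intro h0
    have hae := (lintegral_eq_zero_iff hh).mp h0
    have hfz : g =ᵐ[volume] 0 := by
      have h1 : (volume : Measure ℝ) {0} = 0 := measure_singleton 0
      have h2 : ∀ᵐ t : ℝ, t ≠ 0 := by rw [ae_iff]; simp [h1]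
      filter_upwards [hae, h2] with t ht htz
      have ht' : t ^ 2 * f t ≤ 0 := by
        simpa [ENNReal.ofReal_eq_zero] using ht
      have ht2 : (0:ℝ) < t ^ 2 := by positivity
      have : f t ≤ 0 := by nlinarith [hnonneg t]
      show ENNReal.ofReal (f t) = 0
      simp [ENNReal.ofReal_eq_zero, this]
    have h1 : (1 : ℝ≥0∞) = 0 := by
      rw [← hdens, lintegral_congr_ae hfz]; simp
    simp at h1
  -- M ≠ 0
  have hM0 : M ≠ 0 := by
    intro h0
    have hfz : f =ᵐ[volume] 0 :=
      (eLpNorm_eq_zero_iff hmeas.aestronglyMeasurable (by simp)).mp h0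
    have h1 : (1 : ℝ≥0∞) = 0 := by
      rw [← hdens, lintegral_congr_ae (hfz.mono fun t ht => by
        show ENNReal.ofReal (f t) = 0
        simp [show f t = 0 from ht])]
      simp
    simp at h1
  rcases eq_or_ne M ⊤ with hMt | hMt
  · rw [hMt]
    rw [show ((⊤:ℝ≥0∞)) ^ 2 = ⊤ by simp [pow_two], ENNReal.top_mul hI0]
    exact le_top
  -- main case
  have hm : 0 < M.toReal := ENNReal.toReal_pos hM0 hMt
  set m : ℝ := M.toReal with hmdef
  have hMm : M = ENNReal.ofReal m := by rw [hmdef, ENNReal.ofReal_toReal hMt]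
  set c : ℝ := 1 / (2 * m) with hcdef
  have hc : 0 < c := by positivity
  set S : Set ℝ := Set.Icc (-c) c with hSdef
  have hS : MeasurableSet S := measurableSet_Icc
  set A : ℝ≥0∞ := ∫⁻ t in S, g t with hAdef
  set B : ℝ≥0∞ := ∫⁻ t in Sᶜ, g t with hBdef
  have hAB : A + B = 1 := by rw [hAdef, hBdef, lintegral_add_compl _ hS, ← hdens]
  have hA1 : A ≤ 1 := by rw [← hAB]; exact le_self_add
  have hAt : A ≠ ⊤ := (lt_of_le_of_lt hA1 (by norm_num)).ne
  -- key1 : ofReal (c^2) * B ≤ ∫⁻ in Sᶜ, h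
  have key1 : ENNReal.ofReal (c ^ 2) * B ≤ ∫⁻ t in Sᶜ, ENNReal.ofReal (t ^ 2 * f t) := by
    rw [hBdef, ← lintegral_const_mul _ hg]
    refine setLIntegral_mono' hS.compl fun t ht => ?_
    have hct : c ^ 2 ≤ t ^ 2 := by
      simp only [hSdef, Set.mem_compl_iff, Set.mem_Icc, not_and_or, not_le] at ht
      rcases ht with ht | ht <;> nlinarith
    calc ENNReal.ofReal (c ^ 2) * g t ≤ ENNReal.ofReal (t ^ 2) * g t :=
          mul_le_mul_left (ENNReal.ofReal_le_ofReal hct) _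
      _ = ENNReal.ofReal (t ^ 2 * f t) := by
          show _ * ENNReal.ofReal (f t) = _
          rw [← ENNReal.ofReal_mul (sq_nonneg t)]
  -- pointwise a.e. inequality on S, integrated
  have key2 : ∫⁻ t in S, ENNReal.ofReal (t ^ 2) * M ≤
      (∫⁻ t in S, ENNReal.ofReal (t ^ 2 * f t)) +
        ENNReal.ofReal (c ^ 2) * ∫⁻ t in S, (M - g t) := by
    rw [← lintegral_const_mul _ (f := fun t => M - g t) (measurable_const.sub hg),
      ← lintegral_add_left (μ := volume.restrict S) hh]
    refine setLIntegral_mono_ae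
      (hh.add ((measurable_const.sub hg).const_mul _)).aemeasurable ?_
    filter_upwards [hgM] with t htM htS
    have ht2 : t ^ 2 ≤ c ^ 2 := by
      rcases htS with ⟨h1, h2⟩; nlinarith
    have hsplit : M = g t + (M - g t) := (add_tsub_cancel_of_le htM).symm
    calc ENNReal.ofReal (t ^ 2) * M
        = ENNReal.ofReal (t ^ 2) * g t + ENNReal.ofReal (t ^ 2) * (M - g t) := by
          conv_lhs => rw [hsplit]
          rw [mul_add]
      _ ≤ ENNReal.ofReal (t ^ 2 * f t) + ENNReal.ofReal (c ^ 2) * (M - g t) := by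
          refine add_le_add ?_ (mul_le_mul_left (ENNReal.ofReal_le_ofReal ht2) _)
          show ENNReal.ofReal (t ^ 2) * ENNReal.ofReal (f t) ≤ _
          rw [← ENNReal.ofReal_mul (sq_nonneg t)]
  -- compute ∫⁻ in S, (M - g) = B
  have hMS : ∫⁻ t in S, M ∂volume = 1 := by
    rw [setLIntegral_const, hSdef, Real.volume_Icc, hMm, ← ENNReal.ofReal_mul hm.le]
    rw [show m * (c - -c) = 1 by rw [hcdef]; field_simp; ring]
    simp
  have hsub : ∫⁻ t in S, (M - g t) = B := by
    have hadd : (∫⁻ t in S, (M - g t)) + A =  ∫⁻ t in S, M ∂volume := by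
      rw [hAdef, ← lintegral_add_left (μ := volume.restrict S) (f := fun t => M - g t) (measurable_const.sub hg)]
      refine lintegral_congr_ae ?_
      filter_upwards [ae_restrict_of_ae hgM] with t htM
      exact tsub_add_cancel_of_le htM
    rw [hMS] at hadd
    have hadd2 : (∫⁻ t in S, (M - g t)) + A = B + A := by rw [hadd, ← hAB]; ring
    exact WithTop.add_right_cancel hAt hadd2
  -- compute ∫⁻ in S, ofReal (t^2) * M = M * ofReal (2*c^3/3)
  have hU : ∫⁻ t in S, ENNReal.ofReal (t ^ 2) * M = M * ENNReal.ofReal (2 * c ^ 3 / 3) := by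
    rw [lintegral_mul_const _ ((continuous_pow 2).measurable.ennreal_ofReal), mul_comm]
    congr 1
    rw [← ofReal_integral_eq_lintegral_ofReal
      ((continuous_pow 2).integrableOn_Icc) (ae_of_all _ fun t => sq_nonneg t)]
    congr 1
    rw [MeasureTheory.integral_Icc_eq_integral_Ioc,
      ← intervalIntegral.integral_of_le (by linarith : -c ≤ c), integral_pow]
    ring
  -- combine
  have hmain : M * ENNReal.ofReal (2 * c ^ 3 / 3) ≤ I := by
    calc M * ENNReal.ofReal (2 * c ^ 3 / 3) = ∫⁻ t in S, ENNReal.ofReal (t ^ 2) * M := hU.symm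
      _ ≤ (∫⁻ t in S, ENNReal.ofReal (t ^ 2 * f t)) + ENNReal.ofReal (c ^ 2) * B := by
          rw [← hsub]; exact key2
      _ ≤ (∫⁻ t in S, ENNReal.ofReal (t ^ 2 * f t)) +
            ∫⁻ t in Sᶜ, ENNReal.ofReal (t ^ 2 * f t) := by gcongr
      _ = I := by rw [hIdef, lintegral_add_compl _ hS]
  calc (1 : ℝ≥0∞) / 12 = M ^ 2 * (M * ENNReal.ofReal (2 * c ^ 3 / 3)) := by
        rw [hMm, ← ENNReal.ofReal_pow hm.le, ← ENNReal.ofReal_mul hm.le,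
          ← ENNReal.ofReal_mul (by positivity)]
        rw [show m ^ 2 * (m * (2 * c ^ 3 / 3)) = 1 / 12 by rw [hcdef]; field_simp; ring]
        rw [ENNReal.ofReal_div_of_pos (by norm_num)]
        norm_num
    _ ≤ M ^ 2 * I := by gcongr
end

section
/- For an integrable real random variable X, E|X| = (1/π) ∫_{ℝ} (1 − Re E[e^{itX}]) t^{−2} dt. -/
open MeasureTheory Real

noncomputable def gfun : ℝ → ℝ := fun t => (1 - Real.cos t) / t ^ 2

lemma gfun_nonneg (t : ℝ) : 0 ≤ gfun t :=
  div_nonneg (by linarith [Real.cos_le_one t]) (sq_nonneg t)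

lemma gfun_le_half (t : ℝ) : gfun t ≤ 1 / 2 := by
  unfold gfun
  rcases eq_or_ne t 0 with rfl | ht
  · simp
  · rw [div_le_iff₀ (by positivity)]
    nlinarith [Real.one_sub_sq_div_two_le_cos (x := t)]

lemma gfun_le_two_div (t : ℝ) : gfun t ≤ 2 / t ^ 2 := by
  unfold gfun
  rcases eq_or_ne t 0 with rfl | ht
  · simp
  · exact div_le_div_of_nonneg_right (by linarith [Real.neg_one_le_cos t]) (by positivity) |>.trans_eq rfl

lemma gfun_continuousOn : ContinuousOn gfun {(0:ℝ)}ᶜ := by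
  apply ContinuousOn.div
  · exact (continuous_const.sub Real.continuous_cos).continuousOn
  · exact (continuous_pow 2).continuousOn
  · intro x hx; simpa [pow_eq_zero_iff] using hx

lemma gfun_measurable : Measurable gfun := by
  apply Measurable.div
  · exact (measurable_const.sub Real.measurable_cos)
  · exact (measurable_id.pow_const 2)

lemma gfun_integrableOn_Ioi : IntegrableOn gfun (Set.Ioi (1:ℝ)) := by
  have h : IntegrableOn (fun t : ℝ => 2 * t ^ ((-2 : ℝ))) (Set.Ioi (1:ℝ)) := by
    have := (integrableOn_Ioi_rpow_of_lt (a := (-2:ℝ)) (by norm_num) one_pos).smul (2:ℝ)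
    simpa [smul_eq_mul, Pi.smul_def, IntegrableOn] using this
  refine Integrable.mono h (gfun_measurable.aestronglyMeasurable.restrict) ?_
  filter_upwards [ae_restrict_mem measurableSet_Ioi] with t ht
  rw [Real.norm_eq_abs, Real.norm_eq_abs, abs_of_nonneg (gfun_nonneg t)]
  have ht1 : (1:ℝ) < t := ht
  have : t ^ ((-2:ℝ)) = (t^2)⁻¹ := by
    rw [show ((-2:ℝ)) = ((-2 : ℤ) : ℝ) by norm_num, Real.rpow_intCast]
    simp [zpow_neg]
  calc gfun t ≤ 2 / t^2 := gfun_le_two_div t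
    _ = 2 * t ^ ((-2:ℝ)) := by rw [this]; ring
    _ ≤ |2 * t ^ ((-2:ℝ))| := le_abs_self _

lemma gfun_even (t : ℝ) : gfun (-t) = gfun t := by
  unfold gfun; rw [Real.cos_neg, neg_pow]; ring_nf

lemma gfun_integrable : Integrable gfun := by
  have hIic : IntegrableOn gfun (Set.Iic (-1:ℝ)) := by
    rw [← Measure.map_neg_eq_self (volume : Measure ℝ)]
    have m : MeasurableEmbedding fun x : ℝ => -x := (Homeomorph.neg ℝ).measurableEmbedding
    rw [m.integrableOn_map_iff]
    have : (fun x : ℝ => -x) ⁻¹' Set.Iic (-1:ℝ) = Set.Ici (1:ℝ) := by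
      ext x; simp
    rw [this]
    have : (gfun ∘ fun x : ℝ => -x) = gfun := by ext x; exact gfun_even x
    rw [this]
    exact Iff.mpr integrableOn_Ici_iff_integrableOn_Ioi gfun_integrableOn_Ioi
  have hIcc : IntegrableOn gfun (Set.Icc (-1:ℝ) 1) := by
    apply Measure.integrableOn_of_bounded (M := 1/2)
    · exact ((measure_Icc_lt_top).ne)
    · exact gfun_measurable.aestronglyMeasurable
    · filter_upwards with t
      rw [Real.norm_eq_abs, abs_of_nonneg (gfun_nonneg t)]
      exact gfun_le_half t
  have : Set.univ = Set.Iic (-1:ℝ) ∪ (Set.Icc (-1:ℝ) 1 ∪ Set.Ioi 1) := by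
    ext x
    simp only [Set.mem_univ, Set.mem_union, Set.mem_Iic, Set.mem_Icc, Set.mem_Ioi, true_iff]
    rcases le_or_gt x (-1) with h | h
    · exact Or.inl h
    · rcases le_or_gt x 1 with h2 | h2
      · exact Or.inr (Or.inl ⟨h.le, h2⟩)
      · exact Or.inr (Or.inr h2)
  rw [← integrableOn_univ, this]
  exact (hIic.union (hIcc.union gfun_integrableOn_Ioi))

lemma hasDerivAt_aux (a : ℝ) (ha : a ≠ 0) (x : ℝ) :
    HasDerivAt (fun y => (1 - y) * Real.sin (a * y) / a - Real.cos (a * y) / a ^ 2)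
      ((1 - x) * Real.cos (a * x)) x := by
  have hs : HasDerivAt (fun y : ℝ => Real.sin (a * y)) (Real.cos (a * x) * a) x := by
    simpa [Function.comp_def] using (Real.hasDerivAt_sin (a * x)).comp x ((hasDerivAt_id x).const_mul a)
  have hc : HasDerivAt (fun y : ℝ => Real.cos (a * y)) (-Real.sin (a * x) * a) x := by
    simpa [Function.comp_def] using (Real.hasDerivAt_cos (a * x)).comp x ((hasDerivAt_id x).const_mul a)
  have h1 : HasDerivAt (fun y : ℝ => (1 - y) * Real.sin (a * y))
      ((-1) * Real.sin (a * x) + (1 - x) * (Real.cos (a * x) * a)) x := by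
    simpa using ((hasDerivAt_const x (1:ℝ)).fun_sub (hasDerivAt_id' x)).fun_mul hs
  have := ((h1.div_const a).fun_sub (hc.div_const (a ^ 2)))
  refine this.congr_deriv ?_
  field_simp
  ring

lemma integral_L1 (a : ℝ) (ha : a ≠ 0) :
    ∫ x in (0:ℝ)..1, (1 - x) * Real.cos (a * x) = (1 - Real.cos a) / a ^ 2 := by
  rw [intervalIntegral.integral_eq_sub_of_hasDerivAt
    (f := fun y => (1 - y) * Real.sin (a * y) / a - Real.cos (a * y) / a ^ 2)
    (fun x _ => hasDerivAt_aux a ha x)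
    (by apply Continuous.intervalIntegrable; continuity)]
  simp only [Real.sin_zero, Real.cos_zero, mul_zero, mul_one]
  field_simp
  ring

noncomputable def Tri : ℝ → ℂ := fun x => ((max 0 (1 - |x|) : ℝ) : ℂ)

lemma tri_cont : Continuous fun x : ℝ => max 0 (1 - |x|) :=
  continuous_const.max (continuous_const.sub continuous_abs)

lemma tri_zero {x : ℝ} (hx : 1 ≤ |x|) : max 0 (1 - |x|) = 0 :=
  max_eq_left (by linarith)

lemma Tri_continuous : Continuous Tri := Complex.continuous_ofReal.comp tri_cont

lemma Tri_compactSupport : HasCompactSupport Tri := by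
  apply HasCompactSupport.intro (isCompact_Icc (a := (-1:ℝ)) (b := 1))
  intro x hx
  simp only [Set.mem_Icc, not_and_or, not_le] at hx
  have : 1 ≤ |x| := by rcases hx with h | h; · rw [abs_of_neg (by linarith)]; linarith
                       · rw [abs_of_pos (by linarith)]; linarith
  simp [Tri, tri_zero this]

lemma Tri_integrable : Integrable Tri :=
  Tri_continuous.integrable_of_hasCompactSupport Tri_compactSupport

lemma u_integrable (ξ : ℝ) :
    Integrable fun x : ℝ => max 0 (1 - |x|) * Real.cos (2 * π * ξ * x) := by
  apply Continuous.integrable_of_hasCompactSupport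
  · exact tri_cont.mul (Real.continuous_cos.comp (by continuity))
  · apply HasCompactSupport.intro (isCompact_Icc (a := (-1:ℝ)) (b := 1))
    intro x hx
    simp only [Set.mem_Icc, not_and_or, not_le] at hx
    have : 1 ≤ |x| := by rcases hx with h | h; · rw [abs_of_neg (by linarith)]; linarith
                         · rw [abs_of_pos (by linarith)]; linarith
    simp [tri_zero this]

lemma v_integrable (ξ : ℝ) :
    Integrable fun x : ℝ => max 0 (1 - |x|) * Real.sin (-(2 * π * ξ * x)) := by
  apply Continuous.integrable_of_hasCompactSupport
  · exact tri_cont.mul (Real.continuous_sin.comp (by continuity))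
  · apply HasCompactSupport.intro (isCompact_Icc (a := (-1:ℝ)) (b := 1))
    intro x hx
    simp only [Set.mem_Icc, not_and_or, not_le] at hx
    have : 1 ≤ |x| := by rcases hx with h | h; · rw [abs_of_neg (by linarith)]; linarith
                         · rw [abs_of_pos (by linarith)]; linarith
    simp [tri_zero this]

lemma integral_w_zero (ξ : ℝ) :
    ∫ x : ℝ, max 0 (1 - |x|) * Real.sin (-(2 * π * ξ * x)) = 0 := by
  have h : ∀ x : ℝ, max 0 (1 - |(-x)|) * Real.sin (-(2 * π * ξ * (-x)))
      = -(max 0 (1 - |x|) * Real.sin (-(2 * π * ξ * x))) := by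
    intro x
    rw [abs_neg]
    rw [show -(2 * π * ξ * (-x)) = 2 * π * ξ * x by ring,
        show (-(2 * π * ξ * x)) = -(2 * π * ξ * x) from rfl, Real.sin_neg]
    ring
  have := integral_neg_eq_self (fun x : ℝ => max 0 (1 - |x|) * Real.sin (-(2 * π * ξ * x))) volume
  simp_rw [h] at this
  rw [integral_neg] at this
  linarith

lemma integral_u (ξ : ℝ) :
    ∫ x : ℝ, max 0 (1 - |x|) * Real.cos (2 * π * ξ * x)
      = 2 * ∫ x in (0:ℝ)..1, (1 - x) * Real.cos (2 * π * ξ * x) := by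
  set u := fun x : ℝ => max 0 (1 - |x|) * Real.cos (2 * π * ξ * x) with hu
  have hsupp : ∀ x ∉ Set.Ioc (-1:ℝ) 1, u x = 0 := by
    intro x hx
    simp only [Set.mem_Ioc, not_and_or, not_lt, not_le] at hx
    have : 1 ≤ |x| := by
      rcases hx with h | h
      · rw [abs_of_nonpos (by linarith)]; linarith
      · rw [abs_of_pos (by linarith)]; linarith
    simp [hu, tri_zero this]
  rw [← setIntegral_eq_integral_of_forall_compl_eq_zero hsupp]
  rw [← intervalIntegral.integral_of_le (by norm_num : (-1:ℝ) ≤ 1)]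
  have hcont : Continuous u := by
    rw [hu]; exact tri_cont.mul (Real.continuous_cos.comp (by continuity))
  rw [← intervalIntegral.integral_add_adjacent_intervals (a := (-1:ℝ)) (b := 0) (c := 1)
    (hcont.intervalIntegrable _ _) (hcont.intervalIntegrable _ _)]
  have heven : ∀ x : ℝ, u (-x) = u x := by
    intro x
    simp only [hu, abs_neg]
    rw [show 2 * π * ξ * (-x) = -(2 * π * ξ * x) by ring, Real.cos_neg]
  have h1 : ∫ x in (-1:ℝ)..0, u x = ∫ x in (0:ℝ)..1, u x := by
    rw [show (-1:ℝ) = -(1:ℝ) by norm_num, show (0:ℝ) = -(0:ℝ) by norm_num,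
      ← intervalIntegral.integral_comp_neg u]
    simp_rw [heven]
    norm_num
  have h2 : ∫ x in (0:ℝ)..1, u x = ∫ x in (0:ℝ)..1, (1 - x) * Real.cos (2 * π * ξ * x) := by
    apply intervalIntegral.integral_congr
    intro x hx
    rw [Set.uIcc_of_le (by norm_num : (0:ℝ) ≤ 1)] at hx
    have h0 : |x| = x := abs_of_nonneg hx.1
    simp only [hu, h0, max_eq_right (by linarith [hx.2] : (0:ℝ) ≤ 1 - x)]
  rw [h1, h2]
  ring

lemma fourier_Tri (ξ : ℝ) :
    FourierTransform.fourier Tri ξ =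
      ((2 * ∫ x in (0:ℝ)..1, (1 - x) * Real.cos (2 * π * ξ * x) : ℝ) : ℂ) := by
  rw [Real.fourier_real_eq_integral_exp_smul]
  have key : ∀ v : ℝ, Complex.exp (↑(-2 * π * v * ξ) * Complex.I) • Tri v =
      (↑(max 0 (1 - |v|) * Real.cos (2 * π * ξ * v)) : ℂ) +
      (↑(max 0 (1 - |v|) * Real.sin (-(2 * π * ξ * v))) : ℂ) * Complex.I := by
    intro v
    rw [Complex.exp_mul_I, Tri, smul_eq_mul]
    rw [← Complex.ofReal_cos, ← Complex.ofReal_sin]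
    rw [show (-2) * π * v * ξ = -(2 * π * ξ * v) by ring, Real.cos_neg]
    push_cast
    ring
  simp_rw [key]
  have hu' : Integrable (fun x : ℝ => ((max 0 (1 - |x|) * Real.cos (2 * π * ξ * x) : ℝ) : ℂ)) :=
    (u_integrable ξ).ofReal
  have hv' : Integrable
      (fun x : ℝ => ((max 0 (1 - |x|) * Real.sin (-(2 * π * ξ * x)) : ℝ) : ℂ) * Complex.I) :=
    ((v_integrable ξ).ofReal).mul_const Complex.I
  rw [integral_add hu' hv', integral_mul_const,
    show (∫ a : ℝ, ((max 0 (1 - |a|) * Real.sin (-(2 * π * ξ * a)) : ℝ) : ℂ))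
      = ((∫ a : ℝ, max 0 (1 - |a|) * Real.sin (-(2 * π * ξ * a)) : ℝ) : ℂ) from integral_ofReal,
    show (∫ a : ℝ, ((max 0 (1 - |a|) * Real.cos (2 * π * ξ * a) : ℝ) : ℂ))
      = ((∫ a : ℝ, max 0 (1 - |a|) * Real.cos (2 * π * ξ * a) : ℝ) : ℂ) from integral_ofReal,
    integral_w_zero, integral_u]
  push_cast
  ring

lemma fourier_Tri_closed {ξ : ℝ} (hξ : ξ ≠ 0) :
    FourierTransform.fourier Tri ξ = ((2 * gfun (2 * π * ξ) : ℝ) : ℂ) := by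
  rw [fourier_Tri ξ, integral_L1 (2 * π * ξ)
    (mul_ne_zero (mul_ne_zero two_ne_zero Real.pi_ne_zero) hξ)]
  norm_num [gfun]

lemma rfun_integrable : Integrable fun ξ : ℝ => ((2 * gfun (2 * π * ξ) : ℝ) : ℂ) := by
  apply Integrable.ofReal
  exact (gfun_integrable.comp_mul_left'
    (mul_ne_zero two_ne_zero Real.pi_ne_zero)).const_mul 2

lemma ae_ne_zero : ∀ᵐ ξ : ℝ, ξ ≠ (0:ℝ) := by
  rw [ae_iff]
  simp only [ne_eq, not_not, Set.setOf_eq_eq_singleton]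
  exact Real.volume_singleton

lemma fourier_Tri_ae :
    (fun ξ => FourierTransform.fourier Tri ξ)
      =ᵐ[volume] fun ξ : ℝ => ((2 * gfun (2 * π * ξ) : ℝ) : ℂ) := by
  filter_upwards [ae_ne_zero] with ξ hξ
  exact fourier_Tri_closed hξ

lemma fourier_Tri_integrable : Integrable (FourierTransform.fourier Tri) :=
  rfun_integrable.congr fourier_Tri_ae.symm

lemma integral_gfun : ∫ t : ℝ, gfun t = π := by
  have hinv : FourierTransform.fourierInv (FourierTransform.fourier Tri) 0 = Tri 0 :=
    Tri_integrable.fourierInv_fourier_eq fourier_Tri_integrable Tri_continuous.continuousAt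
  have h0 : FourierTransform.fourierInv (FourierTransform.fourier Tri) 0
      = ∫ ξ, FourierTransform.fourier Tri ξ := by
    rw [Real.fourierInv_eq]
    simp
  have hT0 : Tri 0 = (1 : ℂ) := by norm_num [Tri]
  have hint : ∫ ξ, FourierTransform.fourier Tri ξ
      = ((∫ ξ : ℝ, 2 * gfun (2 * π * ξ) : ℝ) : ℂ) := by
    rw [integral_congr_ae fourier_Tri_ae]
    exact integral_ofReal
  have hval : (∫ ξ : ℝ, 2 * gfun (2 * π * ξ)) = (1 / π) * ∫ t, gfun t := by
    rw [integral_const_mul, Measure.integral_comp_mul_left gfun (2 * π)]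
    rw [abs_of_pos (by positivity : (0:ℝ) < (2 * π)⁻¹)]
    rw [smul_eq_mul]
    ring
  have key : (∫ ξ : ℝ, 2 * gfun (2 * π * ξ)) = (1 : ℝ) := by
    have h := h0 ▸ hinv
    rw [hint, hT0] at h
    exact_mod_cast h
  rw [hval] at key
  have hπ : (π : ℝ) ≠ 0 := Real.pi_ne_zero
  field_simp at key
  linarith

lemma pt_eq (x : ℝ) : ∀ t : ℝ, (1 - Real.cos (t * x)) / t ^ 2 = x ^ 2 * gfun (x * t) := by
  intro t
  rcases eq_or_ne t 0 with rfl | ht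
  · simp [gfun]
  · unfold gfun
    rw [mul_comm t x, mul_pow, mul_div_assoc', ← div_div]
    rcases eq_or_ne x 0 with rfl | hx
    · simp
    · rw [mul_comm (x ^ 2), mul_div_assoc, div_self (pow_ne_zero 2 hx), mul_one]

lemma integrable_pt (x : ℝ) :
    Integrable fun t : ℝ => (1 - Real.cos (t * x)) / t ^ 2 := by
  rcases eq_or_ne x 0 with rfl | hx
  · have : (fun t : ℝ => (1 - Real.cos (t * 0)) / t ^ 2) = fun _ => 0 := by
      funext t; simp
    rw [this]; exact integrable_zero _ _ _
  · simp_rw [pt_eq x]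
    exact (gfun_integrable.comp_mul_left' hx).const_mul _

lemma integral_pt (x : ℝ) :
    ∫ t : ℝ, (1 - Real.cos (t * x)) / t ^ 2 = π * |x| := by
  rcases eq_or_ne x 0 with rfl | hx
  · simp
  · simp_rw [pt_eq x]
    rw [integral_const_mul, Measure.integral_comp_mul_left gfun x, integral_gfun, smul_eq_mul]
    rw [abs_inv, show x ^ 2 = |x| ^ 2 from (sq_abs x).symm]
    have h : |x| ≠ 0 := abs_ne_zero.mpr hx
    field_simp

lemma pt_nonneg (x t : ℝ) : 0 ≤ (1 - Real.cos (t * x)) / t ^ 2 :=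
  div_nonneg (by linarith [Real.cos_le_one (t * x)]) (sq_nonneg t)

/-- Haagerup's Fourier-analytic formula: for an integrable real random
variable `X`, `E|X| = (1/π) ∫ (1 − Re E[e^{itX}]) t⁻² dt`, where
`Re E[e^{itX}] = E[cos(tX)]`. -/
theorem abs_expectation_fourier_formula
    {Ω : Type*} [MeasureSpace Ω] [IsProbabilityMeasure (volume : Measure Ω)]
    (X : Ω → ℝ) (hX : Integrable X) :
    ∫ ω, |X ω| = (1 / Real.pi) *
      ∫ t : ℝ, (1 - ∫ ω, Real.cos (t * X ω)) / t ^ 2 := by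
  have hXm : AEMeasurable X := hX.aemeasurable
  have hcos_int : ∀ t : ℝ, Integrable (fun ω => Real.cos (t * X ω)) := by
    intro t
    apply Integrable.mono' (integrable_const (1:ℝ))
    · exact (Real.measurable_cos.comp_aemeasurable
        ((aemeasurable_const.mul hXm))).aestronglyMeasurable
    · filter_upwards with ω
      rw [Real.norm_eq_abs]
      exact Real.abs_cos_le_one _
  have h2 : (fun t : ℝ => (1 - ∫ ω, Real.cos (t * X ω)) / t ^ 2)
      = fun t : ℝ => ∫ ω, (1 - Real.cos (t * X ω)) / t ^ 2 := by
    funext t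
    rw [integral_div, integral_sub (integrable_const 1) (hcos_int t), integral_const]
    simp
  have hF_meas : AEStronglyMeasurable
      (fun p : ℝ × Ω => (1 - Real.cos (p.1 * X p.2)) / p.1 ^ 2) (volume.prod volume) := by
    have hX2 : AEMeasurable (fun p : ℝ × Ω => X p.2) (volume.prod volume) :=
      hXm.comp_quasiMeasurePreserving Measure.quasiMeasurePreserving_snd
    have : AEMeasurable (fun p : ℝ × Ω => (1 - Real.cos (p.1 * X p.2)) / p.1 ^ 2)
        (volume.prod volume) := by
      apply AEMeasurable.div
      · exact aemeasurable_const.sub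
          (Real.measurable_cos.comp_aemeasurable (measurable_fst.aemeasurable.mul hX2))
      · exact (measurable_fst.pow_const 2).aemeasurable
    exact this.aestronglyMeasurable
  have hprod : Integrable (fun p : ℝ × Ω => (1 - Real.cos (p.1 * X p.2)) / p.1 ^ 2)
      (volume.prod volume) := by
    rw [integrable_prod_iff' hF_meas]
    constructor
    · filter_upwards with ω
      exact integrable_pt (X ω)
    · have heq : (fun ω => ∫ t : ℝ, ‖(1 - Real.cos (t * X ω)) / t ^ 2‖) =
          fun ω => π * |X ω| := by
        funext ω
        rw [← integral_pt (X ω)]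
        congr 1
        funext t
        rw [Real.norm_eq_abs, abs_of_nonneg (pt_nonneg _ _)]
      rw [heq]
      exact hX.abs.const_mul π
  rw [h2]
  rw [integral_integral_swap hprod]
  have h3 : ∫ ω, (∫ t : ℝ, (1 - Real.cos (t * X ω)) / t ^ 2) = ∫ ω, π * |X ω| := by
    congr 1
    funext ω
    exact integral_pt (X ω)
  rw [h3, integral_const_mul]
  rw [← mul_assoc]
  rw [one_div, inv_mul_cancel₀ Real.pi_ne_zero, one_mul]
end

section
/- The function F(s) = (2/√(πs)) · Γ((s+1)/2)/Γ(s/2) is nondecreasing on (0, ∞), and equals the infinite product √(2/π) · ∏_{k=0}^∞ (1 − 1/(s+2k+1)²)^{1/2}; in particular F(2) = 1/√2 and F(s) → √(2/π) as s → ∞. -/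
open Real Filter Finset Topology

private lemma myHasProd (f : ℕ → ℝ) (h0 : ∀ k, 0 ≤ f k) (h1 : ∀ k, f k ≤ 1) :
    HasProd f (⨅ S : Finset ℕ, ∏ i ∈ S, f i) := by
  have anti : Antitone (fun S : Finset ℕ => ∏ i ∈ S, f i) := by
    intro S T hST
    calc ∏ i ∈ T, f i = (∏ i ∈ T \ S, f i) * ∏ i ∈ S, f i := (Finset.prod_sdiff hST).symm
    _ ≤ 1 * ∏ i ∈ S, f i := by
        apply mul_le_mul_of_nonneg_right
          (Finset.prod_le_one (fun i _ => h0 i) (fun i _ => h1 i))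
          (Finset.prod_nonneg fun i _ => h0 i)
    _ = _ := one_mul _
  have hbdd : BddBelow (Set.range fun S : Finset ℕ => ∏ i ∈ S, f i) :=
    ⟨0, by rintro x ⟨S, rfl⟩; exact Finset.prod_nonneg fun i _ => h0 i⟩
  exact tendsto_atTop_ciInf anti hbdd

private lemma prod_one_sub_ge (n : ℕ) (a : ℕ → ℝ) (h0 : ∀ k, 0 ≤ a k) (h1 : ∀ k, a k ≤ 1) :
    1 - ∑ k ∈ range n, a k ≤ ∏ k ∈ range n, (1 - a k) := by
  induction n with
  | zero => simp
  | succ n ih =>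
    rw [Finset.prod_range_succ, Finset.sum_range_succ]
    have hP : (0:ℝ) ≤ ∏ k ∈ range n, (1 - a k) :=
      Finset.prod_nonneg fun k _ => by linarith [h1 k]
    have hS : (0:ℝ) ≤ ∑ k ∈ range n, a k := Finset.sum_nonneg fun k _ => h0 k
    nlinarith [h0 n, h1 n]

private lemma sqrt_finset_prod (S : Finset ℕ) (g : ℕ → ℝ) (h : ∀ i, 0 ≤ g i) :
    Real.sqrt (∏ i ∈ S, g i) = ∏ i ∈ S, Real.sqrt (g i) := by
  induction S using Finset.cons_induction with
  | empty => simp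
  | cons a S ha ih =>
    rw [Finset.prod_cons, Finset.prod_cons, Real.sqrt_mul (h a), ih]

private lemma gpos (s : ℝ) (hs : 0 < s) (k : ℕ) : 0 < 1 - 1/(s + 2*k + 1)^2 := by
  have h1 : (1:ℝ) < s + 2*k + 1 := by
    have : (0:ℝ) ≤ 2*(k:ℝ) := by positivity
    linarith
  have h2 : (1:ℝ) < (s + 2*k + 1)^2 := one_lt_pow₀ h1 two_ne_zero
  have h3 := (div_lt_one (a := (1:ℝ)) (by positivity : (0:ℝ) < (s + 2*k + 1)^2)).mpr h2
  linarith

private lemma gle1 (s : ℝ) (hs : 0 < s) (k : ℕ) : 1 - 1/(s + 2*k + 1)^2 ≤ 1 := by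
  have : (0:ℝ) ≤ 1/(s + 2*k + 1)^2 := by positivity
  linarith

private lemma prod_eq_gammaSeq (s : ℝ) (hs : 0 < s) (n : ℕ) (hn : n ≠ 0) :
    ∏ k ∈ range (n+1), (1 - 1/(s + 2*k + 1)^2)
      = Real.GammaSeq (s/2 + 1/2) n ^ 2 / (Real.GammaSeq (s/2) n * Real.GammaSeq (s/2 + 1) n) := by
  have hn' : (0:ℝ) < n := by exact_mod_cast Nat.pos_of_ne_zero hn
  have step : ∀ k ∈ range (n+1), (1 - 1/(s + 2*k + 1)^2)
      = (s/2 + k) * ((s/2 + 1) + k) / ((s/2 + 1/2) + k)^2 := by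
    intro k _
    have h1 : s + 2*k + 1 ≠ 0 := by positivity
    have h2 : s/2 + 1/2 + (k:ℝ) ≠ 0 := by positivity
    field_simp
    ring
  rw [Finset.prod_congr rfl step]
  rw [Finset.prod_div_distrib, Finset.prod_mul_distrib, Finset.prod_pow]
  rw [Real.GammaSeq, Real.GammaSeq, Real.GammaSeq]
  have pa : (0:ℝ) < ∏ j ∈ range (n+1), (s/2 + j) :=
    Finset.prod_pos fun j _ => by positivity
  have pa1 : (0:ℝ) < ∏ j ∈ range (n+1), (s/2 + 1 + j) :=
    Finset.prod_pos fun j _ => by positivity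
  have ph : (0:ℝ) < ∏ j ∈ range (n+1), (s/2 + 1/2 + j) :=
    Finset.prod_pos fun j _ => by positivity
  have e1 : ((n:ℝ) ^ (s/2 + 1/2))^2 = (n:ℝ) ^ (s/2) * (n:ℝ) ^ (s/2 + 1) := by
    rw [sq, ← Real.rpow_add hn', ← Real.rpow_add hn']
    congr 1
    ring
  have hfac : (0:ℝ) < (n.factorial : ℝ) := by exact_mod_cast n.factorial_pos
  rw [div_pow, div_mul_div_comm, div_div_div_eq]
  rw [mul_pow, e1]
  rw [div_eq_div_iff (by positivity) (by positivity)]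
  ring

private lemma key_tendsto (s : ℝ) (hs : 0 < s) :
    Tendsto (fun n : ℕ => ∏ k ∈ range n, (1 - 1/(s + 2*k + 1)^2)) atTop
      (𝓝 (Real.Gamma (s/2 + 1/2) ^ 2 / (Real.Gamma (s/2) * Real.Gamma (s/2 + 1)))) := by
  rw [← tendsto_add_atTop_iff_nat 1]
  have h1 := Real.GammaSeq_tendsto_Gamma (s/2)
  have h2 := Real.GammaSeq_tendsto_Gamma (s/2 + 1/2)
  have h3 := Real.GammaSeq_tendsto_Gamma (s/2 + 1)
  have hΓa := Real.Gamma_pos_of_pos (by linarith : (0:ℝ) < s/2)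
  have hΓa1 := Real.Gamma_pos_of_pos (by linarith : (0:ℝ) < s/2 + 1)
  have hne : Real.Gamma (s/2) * Real.Gamma (s/2 + 1) ≠ 0 := by positivity
  have main := ((h2.pow 2).div (h1.mul h3) hne)
  refine main.congr' ?_
  filter_upwards [eventually_ge_atTop 1] with n hn
  exact (prod_eq_gammaSeq s hs n (by omega)).symm

private lemma master (s : ℝ) (hs : 0 < s) :
    HasProd (fun k : ℕ => Real.sqrt (1 - 1/(s + 2*k + 1)^2))
      (Real.Gamma (s/2 + 1/2) / (Real.sqrt (s/2) * Real.Gamma (s/2))) := by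
  have hΓa := Real.Gamma_pos_of_pos (by linarith : (0:ℝ) < s/2)
  have hΓh := Real.Gamma_pos_of_pos (by linarith : (0:ℝ) < s/2 + 1/2)
  have h0 : ∀ k : ℕ, 0 ≤ Real.sqrt (1 - 1/(s + 2*k + 1)^2) := fun k => Real.sqrt_nonneg _
  have h1 : ∀ k : ℕ, Real.sqrt (1 - 1/(s + 2*k + 1)^2) ≤ 1 := fun k =>
    Real.sqrt_le_one.mpr (gle1 s hs k)
  have hasP := myHasProd _ h0 h1
  have hF : Tendsto (fun n : ℕ => ∏ k ∈ range n, Real.sqrt (1 - 1/(s + 2*k + 1)^2)) atTop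
      (𝓝 (Real.sqrt (Real.Gamma (s/2 + 1/2) ^ 2 / (Real.Gamma (s/2) * Real.Gamma (s/2 + 1))))) := by
    have := (Real.continuous_sqrt.tendsto _).comp (key_tendsto s hs)
    refine this.congr fun n => ?_
    exact sqrt_finset_prod _ _ (fun i => (gpos s hs i).le)
  have huniq := tendsto_nhds_unique hasP.tendsto_prod_nat hF
  rw [huniq] at hasP
  have key : Real.Gamma (s/2) * Real.Gamma (s/2 + 1) = (Real.sqrt (s/2) * Real.Gamma (s/2))^2 := by
    rw [Real.Gamma_add_one (by positivity : s/2 ≠ 0), mul_pow, Real.sq_sqrt (by positivity : (0:ℝ) ≤ s/2)]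
    ring
  have heq : Real.sqrt (Real.Gamma (s/2 + 1/2) ^ 2 / (Real.Gamma (s/2) * Real.Gamma (s/2 + 1)))
      = Real.Gamma (s/2 + 1/2) / (Real.sqrt (s/2) * Real.Gamma (s/2)) := by
    rw [key, Real.sqrt_div (sq_nonneg _), Real.sqrt_sq hΓh.le,
      Real.sqrt_sq (by positivity : (0:ℝ) ≤ Real.sqrt (s/2) * Real.Gamma (s/2))]
  rwa [heq] at hasP

private lemma sum_bound (s : ℝ) (hs : 0 < s) (n : ℕ) :
    ∑ k ∈ range n, 1/(s + 2*k + 1)^2 ≤ 1/(2*s) := by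
  have key : ∀ k : ℕ, 1/(s + 2*(k:ℝ) + 1)^2 ≤ 1/(2*(s+2*(k:ℝ))) - 1/(2*(s+2*(k:ℝ)+2)) := by
    intro k
    have hk : (0:ℝ) ≤ (k:ℝ) := k.cast_nonneg
    have e : 1/(2*(s+2*(k:ℝ))) - 1/(2*(s+2*(k:ℝ)+2)) = 1/((s+2*(k:ℝ))*(s+2*(k:ℝ)+2)) := by
      field_simp
      ring
    rw [e]
    apply one_div_le_one_div_of_le (by positivity)
    nlinarith
  have main : ∀ m : ℕ, ∑ k ∈ range m, 1/(s + 2*k + 1)^2 ≤ 1/(2*s) - 1/(2*(s+2*(m:ℝ))) := by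
    intro m
    induction m with
    | zero => norm_num
    | succ m ih =>
      rw [Finset.sum_range_succ]
      have hk := key m
      push_cast
      push_cast at ih
      have e2 : (2:ℝ)*(s+2*((m:ℝ)+1)) = 2*(s+2*(m:ℝ)+2) := by ring
      rw [e2]
      linarith
  have h2n : (0:ℝ) < 1/(2*(s+2*(n:ℝ))) := by positivity
  linarith [main n]

private lemma L_le_one (s : ℝ) (hs : 0 < s) :
    Real.Gamma (s/2 + 1/2) / (Real.sqrt (s/2) * Real.Gamma (s/2)) ≤ 1 :=
  le_of_tendsto' (master s hs).tendsto_prod_nat fun n =>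
    Finset.prod_le_one (fun i _ => Real.sqrt_nonneg _)
      (fun i _ => Real.sqrt_le_one.mpr (gle1 s hs i))

private lemma L_ge (s : ℝ) (hs : 0 < s) :
    Real.sqrt (1 - 1/(2*s)) ≤ Real.Gamma (s/2 + 1/2) / (Real.sqrt (s/2) * Real.Gamma (s/2)) := by
  refine ge_of_tendsto' (master s hs).tendsto_prod_nat fun n => ?_
  have h1 : ∏ k ∈ range n, Real.sqrt (1 - 1/(s + 2*k + 1)^2)
      = Real.sqrt (∏ k ∈ range n, (1 - 1/(s + 2*k + 1)^2)) :=
    (sqrt_finset_prod _ _ fun i => (gpos s hs i).le).symm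
  rw [h1]
  apply Real.sqrt_le_sqrt
  have ha0 : ∀ k : ℕ, 0 ≤ 1/(s + 2*(k:ℝ) + 1)^2 := fun k => by positivity
  have ha1 : ∀ k : ℕ, 1/(s + 2*(k:ℝ) + 1)^2 ≤ 1 := fun k => by
    have := gpos s hs k; linarith
  calc 1 - 1/(2*s) ≤ 1 - ∑ k ∈ range n, 1/(s + 2*k + 1)^2 := by linarith [sum_bound s hs n]
  _ ≤ ∏ k ∈ range n, (1 - 1/(s + 2*k + 1)^2) := prod_one_sub_ge n _ ha0 ha1

/-- The function `F(s) = (2/√(πs)) Γ((s+1)/2)/Γ(s/2)` is nondecreasing on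
`(0,∞)`, equals the infinite product
`√(2/π) ∏_{k=0}^∞ (1 − 1/(s+2k+1)²)^{1/2}`, satisfies `F 2 = 1/√2`, and tends
to `√(2/π)` at infinity. -/
theorem haagerup_F_properties :
    let F : ℝ → ℝ := fun s =>
      2 / Real.sqrt (Real.pi * s) * (Real.Gamma ((s + 1) / 2) / Real.Gamma (s / 2))
    MonotoneOn F (Set.Ioi 0) ∧
    (∀ s > (0 : ℝ), F s =
      Real.sqrt (2 / Real.pi) *
        ∏' k : ℕ, Real.sqrt (1 - 1 / (s + 2 * k + 1) ^ 2)) ∧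
    F 2 = 1 / Real.sqrt 2 ∧
    Tendsto F atTop (nhds (Real.sqrt (2 / Real.pi))) := by
  intro F
  have Feq : ∀ s : ℝ, 0 < s → F s
      = Real.sqrt (2/π) * (Real.Gamma (s/2 + 1/2) / (Real.sqrt (s/2) * Real.Gamma (s/2))) := by
    intro s hs
    have hΓa := Real.Gamma_pos_of_pos (by linarith : (0:ℝ) < s/2)
    have h2 : ((s:ℝ)+1)/2 = s/2 + 1/2 := by ring
    have hsc : 2 / Real.sqrt (π * s) = Real.sqrt (2/π) / Real.sqrt (s/2) := by
      rw [← Real.sqrt_div (by positivity : (0:ℝ) ≤ 2/π)]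
      have e : (2/π)/(s/2) = 2^2/(π*s) := by
        have := Real.pi_pos
        field_simp
      rw [e, Real.sqrt_div (by positivity : (0:ℝ) ≤ (2:ℝ)^2), Real.sqrt_sq (by norm_num : (0:ℝ) ≤ 2)]
    show 2 / Real.sqrt (π * s) * (Real.Gamma ((s+1)/2) / Real.Gamma (s/2)) = _
    rw [h2, hsc, div_mul_div_comm, mul_div_assoc]
  refine ⟨?_, ?_, ?_, ?_⟩
  · intro s hs t ht hst
    have hs' := Set.mem_Ioi.mp hs
    have ht' := Set.mem_Ioi.mp ht
    rw [Feq s hs', Feq t ht']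
    apply mul_le_mul_of_nonneg_left _ (Real.sqrt_nonneg _)
    refine le_of_tendsto_of_tendsto' (master s hs').tendsto_prod_nat
      (master t ht').tendsto_prod_nat fun n => ?_
    refine Finset.prod_le_prod (fun i _ => Real.sqrt_nonneg _) fun i _ => ?_
    apply Real.sqrt_le_sqrt
    have h1 : (0:ℝ) < s + 2*i + 1 := by positivity
    have h2 : s + 2*(i:ℝ) + 1 ≤ t + 2*i + 1 := by linarith
    have h3 : 1/(t+2*(i:ℝ)+1)^2 ≤ 1/(s+2*(i:ℝ)+1)^2 :=
      one_div_le_one_div_of_le (by positivity) (pow_le_pow_left₀ h1.le h2 2)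
    linarith
  · intro s hs
    rw [Feq s hs, (master s hs).tprod_eq]
  · rw [Feq 2 two_pos]
    have h32 : (2:ℝ)/2 + 1/2 = 1/2 + 1 := by norm_num
    have h22 : (2:ℝ)/2 = 1 := by norm_num
    rw [h32, Real.Gamma_add_one (by norm_num : (1:ℝ)/2 ≠ 0), Real.Gamma_one_half_eq,
      h22, Real.Gamma_one, Real.sqrt_one,
      Real.sqrt_div (by norm_num : (0:ℝ) ≤ 2)]
    have hπ : (0:ℝ) < Real.sqrt π := Real.sqrt_pos.mpr Real.pi_pos
    have h2 : Real.sqrt 2 * Real.sqrt 2 = 2 := Real.mul_self_sqrt (by norm_num)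
    have h2' : (0:ℝ) < Real.sqrt 2 := Real.sqrt_pos.mpr (by norm_num)
    field_simp
    exact Real.sq_sqrt (by norm_num)
  · have t1 : Tendsto (fun s : ℝ => 1/(2*s)) atTop (𝓝 0) := by
      have h : Tendsto (fun s : ℝ => 2*s) atTop atTop :=
        Tendsto.const_mul_atTop two_pos tendsto_id
      have := tendsto_inv_atTop_zero.comp h
      simpa [one_div, Function.comp_def] using this
    have t2 : Tendsto (fun s : ℝ => 1 - 1/(2*s)) atTop (𝓝 1) := by
      have := t1.const_sub 1
      simpa using this
    have t3 := (Real.continuous_sqrt.tendsto 1).comp t2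
    simp only [Function.comp_def, Real.sqrt_one] at t3
    have hlow : Tendsto (fun s : ℝ => Real.sqrt (2/π) * Real.sqrt (1 - 1/(2*s))) atTop
        (𝓝 (Real.sqrt (2/π))) := by
      have := t3.const_mul (Real.sqrt (2/π))
      simpa using this
    apply tendsto_of_tendsto_of_tendsto_of_le_of_le' hlow tendsto_const_nhds
    · filter_upwards [eventually_gt_atTop 0] with s hs
      rw [Feq s hs]
      exact mul_le_mul_of_nonneg_left (L_ge s hs) (Real.sqrt_nonneg _)
    · filter_upwards [eventually_gt_atTop 0] with s hs
      rw [Feq s hs]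
      calc Real.sqrt (2/π) * (Real.Gamma (s/2 + 1/2) / (Real.sqrt (s/2) * Real.Gamma (s/2)))
          ≤ Real.sqrt (2/π) * 1 := mul_le_mul_of_nonneg_left (L_le_one s hs) (Real.sqrt_nonneg _)
      _ = _ := mul_one _
end

section
/- Two-intersection criterion for the convex stochastic order: let X, Y be real random variables with even densities f and g respectively such that E|X| = E|Y|, and suppose there exist 0 < x₁ < x₂ with {t ≥ 0 : g(t) < f(t)} = (x₁, x₂). Then E φ(X) ≤ E φ(Y) for every even convex function φ : ℝ → [0, ∞]. -/
open MeasureTheory ENNReal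

private lemma ofReal_eq_ofReal_max (x : ℝ) :
    ENNReal.ofReal x = ENNReal.ofReal (max x 0) := by
  rcases le_total x 0 with h | h
  · rw [max_eq_right h, ENNReal.ofReal_eq_zero.mpr h, ENNReal.ofReal_zero]
  · rw [max_eq_left h]

private lemma max_eq_add_max_neg (x : ℝ) : max x 0 = x + max (-x) 0 := by
  rcases le_total x 0 with h | h
  · rw [max_eq_right h, max_eq_left (by linarith)]; ring
  · rw [max_eq_left h, max_eq_right (by linarith)]; ring

set_option maxHeartbeats 1000000

/-- Two-intersection criterion for the convex stochastic order: if `X`, `Y`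
have even probability densities `f`, `g` with `E|X| = E|Y|`, and
`{t ≥ 0 : g t < f t}` is an interval `(x₁, x₂)` with `0 < x₁ < x₂`, then
`E φ(X) ≤ E φ(Y)` for every even convex `φ : ℝ → [0,∞]`. Expectations are
computed via the densities. -/
theorem convex_order_two_intersections
    (f g : ℝ → ℝ) (hf : Measurable f) (hg : Measurable g)
    (hf0 : ∀ t, 0 ≤ f t) (hg0 : ∀ t, 0 ≤ g t)
    (hfe : ∀ t, f (-t) = f t) (hge : ∀ t, g (-t) = g t)
    (hfd : ∫⁻ t, ENNReal.ofReal (f t) = 1)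
    (hgd : ∫⁻ t, ENNReal.ofReal (g t) = 1)
    (hXint : Integrable (fun t => |t| * f t))
    (hYint : Integrable (fun t => |t| * g t))
    (hmom : ∫ t, |t| * f t = ∫ t, |t| * g t)
    (x₁ x₂ : ℝ) (hx₁ : 0 < x₁) (hx₁₂ : x₁ < x₂)
    (hcross : {t : ℝ | 0 ≤ t ∧ g t < f t} = Set.Ioo x₁ x₂)
    (φ : ℝ → ℝ≥0∞) (hφe : ∀ t, φ (-t) = φ t)
    (hφc : ∀ x y : ℝ, ∀ θ : ℝ, 0 ≤ θ → θ ≤ 1 →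
      φ (θ * x + (1 - θ) * y) ≤
        ENNReal.ofReal θ * φ x + ENNReal.ofReal (1 - θ) * φ y) :
    ∫⁻ t, φ t * ENNReal.ofReal (f t) ≤ ∫⁻ t, φ t * ENNReal.ofReal (g t) := by
  have hx21 : (0:ℝ) < x₂ - x₁ := by linarith
  have habsf : ∀ t : ℝ, f |t| = f t := by
    intro t; rcases le_or_gt 0 t with h | h
    · rw [abs_of_nonneg h]
    · rw [abs_of_neg h, hfe]
  have habsg : ∀ t : ℝ, g |t| = g t := by
    intro t; rcases le_or_gt 0 t with h | h
    · rw [abs_of_nonneg h]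
    · rw [abs_of_neg h, hge]
  have habsφ : ∀ t : ℝ, φ |t| = φ t := by
    intro t; rcases le_or_gt 0 t with h | h
    · rw [abs_of_nonneg h]
    · rw [abs_of_neg h, hφe]
  have cross' : ∀ t : ℝ, g t < f t ↔ (x₁ < |t| ∧ |t| < x₂) := by
    intro t
    have h := Set.ext_iff.mp hcross |t|
    simp only [Set.mem_setOf_eq, Set.mem_Ioo] at h
    rw [← habsf t, ← habsg t]
    constructor
    · intro hlt; exact h.mp ⟨abs_nonneg t, hlt⟩
    · intro hm; exact (h.mpr hm).2
  have crossle : ∀ t : ℝ, ¬ (x₁ < |t| ∧ |t| < x₂) → f t ≤ g t := by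
    intro t ht
    by_contra hc
    exact ht ((cross' t).mp (lt_of_not_ge hc))
  -- integrability of the densities
  have hfInt : Integrable f := by
    refine ⟨hf.aestronglyMeasurable, ?_⟩
    rw [hasFiniteIntegral_iff_norm]
    simp_rw [Real.norm_eq_abs, abs_of_nonneg (hf0 _)]
    rw [hfd]; exact one_lt_top
  have hgInt : Integrable g := by
    refine ⟨hg.aestronglyMeasurable, ?_⟩
    rw [hasFiniteIntegral_iff_norm]
    simp_rw [Real.norm_eq_abs, abs_of_nonneg (hg0 _)]
    rw [hgd]; exact one_lt_top
  have hif : ∫ t, f t = 1 := by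
    have h := MeasureTheory.ofReal_integral_eq_lintegral_ofReal hfInt (ae_of_all _ hf0)
    rw [hfd] at h
    exact ENNReal.ofReal_eq_one.mp h
  have hig : ∫ t, g t = 1 := by
    have h := MeasureTheory.ofReal_integral_eq_lintegral_ofReal hgInt (ae_of_all _ hg0)
    rw [hgd] at h
    exact ENNReal.ofReal_eq_one.mp h
  -- monotonicity of φ from 0
  have hφ0le : ∀ t, φ 0 ≤ φ t := by
    intro t
    have h := hφc t (-t) (1/2) (by norm_num) (by norm_num)
    have e1 : (1/2 : ℝ) * t + (1 - 1/2) * (-t) = 0 := by ring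
    rw [e1, hφe] at h
    have e2 : (1:ℝ) - 1/2 = 1/2 := by norm_num
    rw [e2] at h
    calc φ 0 ≤ ENNReal.ofReal (1/2) * φ t + ENNReal.ofReal (1/2) * φ t := h
      _ = (ENNReal.ofReal (1/2) + ENNReal.ofReal (1/2)) * φ t := by ring
      _ = ENNReal.ofReal 1 * φ t := by
          rw [← ENNReal.ofReal_add (by norm_num) (by norm_num)]; norm_num
      _ = φ t := by rw [ENNReal.ofReal_one, one_mul]
  by_cases hφ2 : φ x₂ = ⊤
  · -- degenerate case: φ is infinite on [x₂, ∞), and the RHS is infinite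
    have φtop : ∀ t : ℝ, x₂ ≤ |t| → φ t = ⊤ := by
      intro t ht
      rw [← habsφ t]
      by_cases h0 : φ 0 = ⊤
      · exact eq_top_iff.mpr (h0 ▸ hφ0le |t|)
      rcases eq_or_lt_of_le ht with heq | hlt
      · rw [← heq]; exact hφ2
      have hspos : (0:ℝ) < |t| := lt_trans (lt_trans hx₁ hx₁₂) hlt
      by_contra hs
      set θ : ℝ := x₂ / |t| with hθdef
      have hθ0 : 0 ≤ θ := div_nonneg (by linarith) hspos.le
      have hθ1 : θ ≤ 1 := (div_le_one hspos).mpr hlt.le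
      have h := hφc |t| 0 θ hθ0 hθ1
      have e : θ * |t| + (1 - θ) * 0 = x₂ := by
        simp only [hθdef]; field_simp; ring
      rw [e, hφ2] at h
      have hfin : ENNReal.ofReal θ * φ |t| + ENNReal.ofReal (1 - θ) * φ 0 < ⊤ := by
        apply ENNReal.add_lt_top.mpr
        exact ⟨ENNReal.mul_lt_top ofReal_lt_top (Ne.lt_top hs), ENNReal.mul_lt_top ofReal_lt_top (Ne.lt_top h0)⟩
      exact absurd (top_le_iff.mp h) hfin.ne
    -- the set where |t| ≥ x₂
    set S : Set ℝ := {t : ℝ | x₂ ≤ |t|} with hSdef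
    have mS : MeasurableSet S := measurableSet_le measurable_const measurable_abs
    set w : ℝ → ℝ := fun t => (|t| - x₁) * (f t - g t) with hwdef
    have hwInt : Integrable w := by
      have he : w = fun t => (|t| * f t - |t| * g t) - (x₁ * f t - x₁ * g t) := by
        funext t; simp only [hwdef]; ring
      rw [he]
      exact (hXint.sub hYint).sub ((hfInt.const_mul x₁).sub (hgInt.const_mul x₁))
    have hXY : Integrable (fun t => |t| * f t - |t| * g t) := hXint.sub hYint
    have hx₁fg : Integrable (fun t => x₁ * f t - x₁ * g t) :=
      (hfInt.const_mul x₁).sub (hgInt.const_mul x₁)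
    have hw0 : ∫ t, w t = 0 := by
      have he : w = fun t => (|t| * f t - |t| * g t) - (x₁ * f t - x₁ * g t) := by
        funext t; simp only [hwdef]; ring
      rw [he, integral_sub hXY hx₁fg,
        integral_sub hXint hYint, integral_sub (hfInt.const_mul x₁) (hgInt.const_mul x₁),
        integral_const_mul, integral_const_mul, hif, hig, hmom]
      ring
    have hS : ∫⁻ t in S, ENNReal.ofReal (g t) ≠ 0 := by
      intro h0
      have hg0' : ∀ᵐ t ∂(volume.restrict S), ENNReal.ofReal (g t) = 0 := by
        have := (lintegral_eq_zero_iff (hg.ennreal_ofReal)).mp h0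
        filter_upwards [this] with t ht using ht
      have hgS : ∀ᵐ t ∂(volume.restrict S), g t = 0 :=
        hg0'.mono fun t ht => le_antisymm (ENNReal.ofReal_eq_zero.mp ht) (hg0 t)
      have hwS : ∀ᵐ t ∂(volume.restrict S), w t = 0 := by
        filter_upwards [hgS, ae_restrict_mem mS] with t hgt htS
        have hfle : f t ≤ g t := by
          apply crossle
          rintro ⟨-, h2⟩
          exact absurd htS (by simpa [hSdef] using h2.not_ge)
        have hft : f t = 0 := le_antisymm (hgt ▸ hfle) (hf0 t)
        simp [hwdef, hft, hgt]
      have hSw : ∫ t in S, w t = 0 := by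
        rw [integral_congr_ae hwS, integral_zero]
      set A : Set ℝ := {t : ℝ | x₁ < |t| ∧ |t| < x₂} with hAdef
      set B : Set ℝ := {t : ℝ | |t| ≤ x₁} with hBdef
      have mA : MeasurableSet A :=
        (measurableSet_lt measurable_const measurable_abs).inter
          (measurableSet_lt measurable_abs measurable_const)
      have hScompl : Sᶜ = B ∪ A := by
        ext t
        simp only [hSdef, hBdef, hAdef, Set.mem_compl_iff, Set.mem_setOf_eq, Set.mem_union,
          not_le]
        constructor
        · intro h
          rcases le_or_gt |t| x₁ with h1 | h1
          · exact Or.inl h1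
          · exact Or.inr ⟨h1, h⟩
        · rintro (h | ⟨-, h⟩)
          · linarith
          · exact h
      have hdisj : Disjoint B A := by
        rw [Set.disjoint_left]
        rintro t ht ⟨ht1, -⟩
        simp only [hBdef, Set.mem_setOf_eq] at ht
        linarith
      have hsplit : ∫ t, w t = (∫ t in S, w t) + ∫ t in Sᶜ, w t :=
        (integral_add_compl mS hwInt).symm
      have hsplit2 : ∫ t in Sᶜ, w t = (∫ t in B, w t) + ∫ t in A, w t := by
        rw [hScompl]
        exact setIntegral_union hdisj mA hwInt.integrableOn hwInt.integrableOn
      have hBnn : 0 ≤ ∫ t in B, w t := by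
        apply setIntegral_nonneg (measurableSet_le measurable_abs measurable_const)
        intro t ht
        simp only [Set.mem_setOf_eq] at ht
        have h1 : f t ≤ g t := crossle t (by rintro ⟨h2, -⟩; linarith)
        have : |t| - x₁ ≤ 0 := by linarith
        simp only [hwdef]
        nlinarith [mul_nonneg (neg_nonneg.2 this) (neg_nonneg.2 (by linarith : f t - g t ≤ 0))]
      have hApos : 0 < ∫ t in A, w t := by
        have hwApos : ∀ t ∈ A, 0 < w t := by
          intro t ht
          simp only [hAdef, Set.mem_setOf_eq] at ht
          have := (cross' t).mpr ht
          simp only [hwdef]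
          exact mul_pos (by linarith [ht.1]) (by linarith)
        rw [setIntegral_pos_iff_support_of_nonneg_ae]
        · refine lt_of_lt_of_le ?_ (measure_mono ?_ : volume (Set.Ioo x₁ x₂) ≤ _)
          · rw [Real.volume_Ioo]
            exact ENNReal.ofReal_pos.mpr hx21
          · intro t ht
            simp only [Set.mem_Ioo] at ht
            have htA : t ∈ A := by
              simp only [hAdef, Set.mem_setOf_eq, abs_of_pos (lt_trans hx₁ ht.1)]
              exact ht
            exact ⟨ne_of_gt (hwApos t htA), htA⟩
        · filter_upwards [ae_restrict_mem mA] with t ht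
          exact (hwApos t ht).le
        · exact hwInt.integrableOn
      rw [hsplit, hSw, hsplit2] at hw0
      linarith
    have hRtop : ∫⁻ t, φ t * ENNReal.ofReal (g t) = ⊤ := by
      rw [eq_top_iff]
      calc (⊤ : ℝ≥0∞) = ⊤ * ∫⁻ t in S, ENNReal.ofReal (g t) := (ENNReal.top_mul hS).symm
        _ = ∫⁻ t in S, ⊤ * ENNReal.ofReal (g t) := (lintegral_const_mul ⊤ hg.ennreal_ofReal).symm
        _ = ∫⁻ t in S, φ t * ENNReal.ofReal (g t) := by
            apply setLIntegral_congr_fun mS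
            exact fun t ht => by rw [φtop t ht]
        _ ≤ ∫⁻ t, φ t * ENNReal.ofReal (g t) := setLIntegral_le_lintegral _ _
    rw [hRtop]
    exact le_top
  · -- main case : φ x₂ < ⊤
    have hφ0 : φ 0 ≠ ⊤ := fun h => hφ2 (eq_top_iff.mpr (h ▸ hφ0le x₂))
    have hφ1 : φ x₁ ≠ ⊤ := by
      have hθ0 : (0:ℝ) ≤ x₁ / x₂ := div_nonneg hx₁.le (by linarith)
      have hθ1 : x₁ / x₂ ≤ 1 := (div_le_one (by linarith)).mpr hx₁₂.le
      have h := hφc x₂ 0 (x₁ / x₂) hθ0 hθ1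
      have e : x₁ / x₂ * x₂ + (1 - x₁ / x₂) * 0 = x₁ := by
        have hx2 : x₂ ≠ 0 := ne_of_gt (by linarith)
        field_simp; ring
      rw [e] at h
      intro htop
      rw [htop] at h
      have hfin : ENNReal.ofReal (x₁ / x₂) * φ x₂ + ENNReal.ofReal (1 - x₁ / x₂) * φ 0 < ⊤ := by
        apply ENNReal.add_lt_top.mpr
        exact ⟨ENNReal.mul_lt_top ofReal_lt_top (Ne.lt_top hφ2), ENNReal.mul_lt_top ofReal_lt_top (Ne.lt_top hφ0)⟩
      exact absurd (top_le_iff.mp h) hfin.ne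
    set v₁ : ℝ := (φ x₁).toReal with hv₁def
    set v₂ : ℝ := (φ x₂).toReal with hv₂def
    have hv₁ : ENNReal.ofReal v₁ = φ x₁ := ENNReal.ofReal_toReal hφ1
    have hv₂ : ENNReal.ofReal v₂ = φ x₂ := ENNReal.ofReal_toReal hφ2
    have hv₁0 : 0 ≤ v₁ := ENNReal.toReal_nonneg
    have hv₂0 : 0 ≤ v₂ := ENNReal.toReal_nonneg
    set c : ℝ := (v₂ - v₁) / (x₂ - x₁) with hcdef
    set p : ℝ := v₁ - c * x₁ with hpdef
    have hLx₁ : p + c * x₁ = v₁ := by simp only [hpdef]; ring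
    have hLx₂ : p + c * x₂ = v₂ := by
      simp only [hpdef, hcdef]; field_simp; ring
    -- secant bounds
    have P1 : ∀ s : ℝ, x₁ ≤ s → s ≤ x₂ → φ s ≤ ENNReal.ofReal (p + c * s) := by
      intro s hs1 hs2
      set θ : ℝ := (x₂ - s) / (x₂ - x₁) with hθdef
      have hθ0 : 0 ≤ θ := div_nonneg (by linarith) hx21.le
      have hθ1 : θ ≤ 1 := (div_le_one hx21).mpr (by linarith)
      have h := hφc x₁ x₂ θ hθ0 hθ1
      have e : θ * x₁ + (1 - θ) * x₂ = s := by
        simp only [hθdef]; field_simp; ring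
      rw [e, ← hv₁, ← hv₂, ← ENNReal.ofReal_mul hθ0, ← ENNReal.ofReal_mul (by linarith),
        ← ENNReal.ofReal_add (mul_nonneg hθ0 hv₁0) (mul_nonneg (by linarith) hv₂0)] at h
      refine h.trans (le_of_eq ?_)
      congr 1
      simp only [hθdef, hcdef, hpdef]
      field_simp
      ring
    have P2 : ∀ s : ℝ, 0 ≤ s → s ≤ x₁ → ENNReal.ofReal (p + c * s) ≤ φ s := by
      intro s hs0 hs1
      by_cases hφs : φ s = ⊤
      · rw [hφs]; exact le_top
      set u : ℝ := (φ s).toReal with hudef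
      have hu : ENNReal.ofReal u = φ s := ENNReal.ofReal_toReal hφs
      have hu0 : 0 ≤ u := ENNReal.toReal_nonneg
      have hxs : (0:ℝ) < x₂ - s := by linarith
      set θ : ℝ := (x₂ - x₁) / (x₂ - s) with hθdef
      have hθ0 : 0 ≤ θ := div_nonneg hx21.le hxs.le
      have hθ1 : θ ≤ 1 := (div_le_one hxs).mpr (by linarith)
      have h := hφc s x₂ θ hθ0 hθ1
      have e : θ * s + (1 - θ) * x₂ = x₁ := by
        simp only [hθdef]; field_simp; ring
      rw [e, ← hv₁, ← hu, ← hv₂, ← ENNReal.ofReal_mul hθ0, ← ENNReal.ofReal_mul (by linarith),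
        ← ENNReal.ofReal_add (mul_nonneg hθ0 hu0) (mul_nonneg (by linarith) hv₂0)] at h
      have hreal : v₁ ≤ θ * u + (1 - θ) * v₂ :=
        (ENNReal.ofReal_le_ofReal_iff
          (add_nonneg (mul_nonneg hθ0 hu0) (mul_nonneg (by linarith) hv₂0))).mp h
      rw [← hu]
      apply ENNReal.ofReal_le_ofReal
      have hθs : θ * (x₂ - s) = x₂ - x₁ := by
        simp only [hθdef]; field_simp
      have h3 : v₁ * (x₂ - s) ≤ (θ * u + (1 - θ) * v₂) * (x₂ - s) :=
        mul_le_mul_of_nonneg_right hreal hxs.le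
      have h4 : θ * u * (x₂ - s) = (x₂ - x₁) * u := by
        rw [mul_comm θ u, mul_assoc, hθs]; ring
      have h5 : θ * v₂ * (x₂ - s) = (x₂ - x₁) * v₂ := by
        rw [mul_comm θ v₂, mul_assoc, hθs]; ring
      have h6 : v₁ * (x₂ - s) ≤ (x₂ - x₁) * u + v₂ * (x₂ - s) - (x₂ - x₁) * v₂ := by
        nlinarith [h3, h4, h5]
      have hpc : p + c * s = (v₁ * (x₂ - s) + v₂ * (s - x₁)) / (x₂ - x₁) := by
        simp only [hpdef, hcdef]; field_simp; ring
      rw [hpc, div_le_iff₀ hx21]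
      nlinarith [h6]
    have P3 : ∀ s : ℝ, x₂ ≤ s → ENNReal.ofReal (p + c * s) ≤ φ s := by
      intro s hs
      rcases eq_or_lt_of_le hs with heq | hlt
      · rw [← heq, hLx₂, hv₂]
      by_cases hφs : φ s = ⊤
      · rw [hφs]; exact le_top
      set u : ℝ := (φ s).toReal with hudef
      have hu : ENNReal.ofReal u = φ s := ENNReal.ofReal_toReal hφs
      have hu0 : 0 ≤ u := ENNReal.toReal_nonneg
      have hxs : (0:ℝ) < s - x₁ := by linarith
      set θ : ℝ := (s - x₂) / (s - x₁) with hθdef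
      have hθ0 : 0 ≤ θ := div_nonneg (by linarith) hxs.le
      have hθ1 : θ ≤ 1 := (div_le_one hxs).mpr (by linarith)
      have h := hφc x₁ s θ hθ0 hθ1
      have e : θ * x₁ + (1 - θ) * s = x₂ := by
        simp only [hθdef]; field_simp; ring
      rw [e, ← hv₂, ← hv₁, ← hu, ← ENNReal.ofReal_mul hθ0, ← ENNReal.ofReal_mul (by linarith),
        ← ENNReal.ofReal_add (mul_nonneg hθ0 hv₁0) (mul_nonneg (by linarith) hu0)] at h
      have hreal : v₂ ≤ θ * v₁ + (1 - θ) * u :=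
        (ENNReal.ofReal_le_ofReal_iff
          (add_nonneg (mul_nonneg hθ0 hv₁0) (mul_nonneg (by linarith) hu0))).mp h
      rw [← hu]
      apply ENNReal.ofReal_le_ofReal
      have hθs : θ * (s - x₁) = s - x₂ := by
        simp only [hθdef]; field_simp
      have h3 : v₂ * (s - x₁) ≤ (θ * v₁ + (1 - θ) * u) * (s - x₁) :=
        mul_le_mul_of_nonneg_right hreal hxs.le
      have h4 : θ * v₁ * (s - x₁) = (s - x₂) * v₁ := by
        rw [mul_comm θ v₁, mul_assoc, hθs]; ring
      have h5 : θ * u * (s - x₁) = (s - x₂) * u := by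
        rw [mul_comm θ u, mul_assoc, hθs]; ring
      have h6 : v₂ * (s - x₁) ≤ (s - x₂) * v₁ + u * (s - x₁) - (s - x₂) * u := by
        nlinarith [h3, h4, h5]
      have hpc : p + c * s = (v₁ * (x₂ - s) + v₂ * (s - x₁)) / (x₂ - x₁) := by
        simp only [hpdef, hcdef]; field_simp; ring
      rw [hpc, div_le_iff₀ hx21]
      nlinarith [h6]
    -- the (clipped) linear function along |t|
    set Lt : ℝ → ℝ := fun t => p + c * |t| with hLtdef
    have mLt : Measurable Lt := measurable_const.add (measurable_abs.const_mul c)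
    have hLnn : ∀ t : ℝ, x₁ < |t| → |t| < x₂ → 0 ≤ Lt t := by
      intro t h1 h2
      simp only [hLtdef]
      rcases le_or_gt 0 c with hc | hc
      · nlinarith [hLx₁]
      · nlinarith [hLx₂]
    -- pointwise exchange inequality
    have hstar : ∀ t : ℝ,
        φ t * ENNReal.ofReal (f t) + ENNReal.ofReal (Lt t) * ENNReal.ofReal (g t)
          ≤ φ t * ENNReal.ofReal (g t) + ENNReal.ofReal (Lt t) * ENNReal.ofReal (f t) := by
      intro t
      rcases lt_or_ge (g t) (f t) with hlt | hle
      · obtain ⟨h1, h2⟩ := (cross' t).mp hlt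
        have hφle : φ t ≤ ENNReal.ofReal (Lt t) := by
          rw [← habsφ t]; exact P1 |t| h1.le h2.le
        have hsplit : ENNReal.ofReal (f t) =
            ENNReal.ofReal (g t) + ENNReal.ofReal (f t - g t) := by
          rw [← ENNReal.ofReal_add (hg0 t) (by linarith)]
          congr 1; ring
        rw [hsplit]
        have key : φ t * ENNReal.ofReal (f t - g t)
            ≤ ENNReal.ofReal (Lt t) * ENNReal.ofReal (f t - g t) :=
          mul_le_mul_left hφle _
        calc φ t * (ENNReal.ofReal (g t) + ENNReal.ofReal (f t - g t)) +
            ENNReal.ofReal (Lt t) * ENNReal.ofReal (g t)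
            = (φ t * ENNReal.ofReal (g t) + ENNReal.ofReal (Lt t) * ENNReal.ofReal (g t))
              + φ t * ENNReal.ofReal (f t - g t) := by ring
          _ ≤ (φ t * ENNReal.ofReal (g t) + ENNReal.ofReal (Lt t) * ENNReal.ofReal (g t))
              + ENNReal.ofReal (Lt t) * ENNReal.ofReal (f t - g t) := add_le_add_right key _
          _ = φ t * ENNReal.ofReal (g t) +
              ENNReal.ofReal (Lt t) * (ENNReal.ofReal (g t) + ENNReal.ofReal (f t - g t)) := by
                ring
      · have hφge : ENNReal.ofReal (Lt t) ≤ φ t := by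
          rw [← habsφ t]
          rcases le_or_gt |t| x₁ with h1 | h1
          · exact P2 |t| (abs_nonneg t) h1
          · rcases lt_or_ge |t| x₂ with h2 | h2
            · -- then g t < f t would follow unless f t ≤ g t; here f t ≤ g t is fine:
              -- we use that φ |t| lies above the secant is not available; but in this
              -- region f t ≤ g t AND the secant bound P1 gives the other direction.
              -- However we only need oL ≤ φ when f ≤ g; in this middle region we use
              -- that f t ≤ g t contradicts cross' only when g t < f t. Here we cannot
              -- conclude oL ≤ φ; instead note f t ≤ g t and g t < f t are exclusive,
              -- and in the middle region from cross' we have g t < f t, contradiction.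
              exact absurd ((cross' t).mpr ⟨h1, h2⟩) (not_lt.mpr hle)
            · exact P3 |t| h2
        have hsplit : ENNReal.ofReal (g t) =
            ENNReal.ofReal (f t) + ENNReal.ofReal (g t - f t) := by
          rw [← ENNReal.ofReal_add (hf0 t) (by linarith)]
          congr 1; ring
        rw [hsplit]
        have key : ENNReal.ofReal (Lt t) * ENNReal.ofReal (g t - f t)
            ≤ φ t * ENNReal.ofReal (g t - f t) :=
          mul_le_mul_left hφge _
        calc φ t * ENNReal.ofReal (f t) +
            ENNReal.ofReal (Lt t) * (ENNReal.ofReal (f t) + ENNReal.ofReal (g t - f t))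
            = (φ t * ENNReal.ofReal (f t) + ENNReal.ofReal (Lt t) * ENNReal.ofReal (f t))
              + ENNReal.ofReal (Lt t) * ENNReal.ofReal (g t - f t) := by ring
          _ ≤ (φ t * ENNReal.ofReal (f t) + ENNReal.ofReal (Lt t) * ENNReal.ofReal (f t))
              + φ t * ENNReal.ofReal (g t - f t) := add_le_add_right key _
          _ = φ t * (ENNReal.ofReal (f t) + ENNReal.ofReal (g t - f t)) +
              ENNReal.ofReal (Lt t) * ENNReal.ofReal (f t) := by ring
    -- measurability of the linear pieces
    have hmoLf : Measurable fun t => ENNReal.ofReal (Lt t) * ENNReal.ofReal (f t) :=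
      mLt.ennreal_ofReal.mul hf.ennreal_ofReal
    have hmoLg : Measurable fun t => ENNReal.ofReal (Lt t) * ENNReal.ofReal (g t) :=
      mLt.ennreal_ofReal.mul hg.ennreal_ofReal
    -- integrate the pointwise inequality
    have hle2 : (∫⁻ t, φ t * ENNReal.ofReal (f t)) +
          (∫⁻ t, ENNReal.ofReal (Lt t) * ENNReal.ofReal (g t))
        ≤ (∫⁻ t, φ t * ENNReal.ofReal (g t)) +
          (∫⁻ t, ENNReal.ofReal (Lt t) * ENNReal.ofReal (f t)) := by
      rw [← lintegral_add_right _ hmoLg, ← lintegral_add_right _ hmoLf]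
      exact lintegral_mono hstar
    -- real-variable comparison of the linear parts
    set M : ℝ → ℝ := fun t => max (Lt t) 0 with hMdef
    have hM0 : ∀ t, 0 ≤ M t := fun t => le_max_right _ _
    have hMle : ∀ t, M t ≤ |p| + |c| * |t| := by
      intro t
      apply max_le
      · show p + c * |t| ≤ |p| + |c| * |t|
        linarith [le_abs_self p, mul_le_mul_of_nonneg_right (le_abs_self c) (abs_nonneg t)]
      · positivity
    have hdomf : Integrable (fun t => (|p| + |c| * |t|) * f t) := by
      have he : (fun t => (|p| + |c| * |t|) * f t)
          = fun t => |p| * f t + |c| * (|t| * f t) := by funext t; ring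
      rw [he]
      exact (hfInt.const_mul _).add (hXint.const_mul _)
    have hdomg : Integrable (fun t => (|p| + |c| * |t|) * g t) := by
      have he : (fun t => (|p| + |c| * |t|) * g t)
          = fun t => |p| * g t + |c| * (|t| * g t) := by funext t; ring
      rw [he]
      exact (hgInt.const_mul _).add (hYint.const_mul _)
    have hMfInt : Integrable (fun t => M t * f t) := by
      apply hdomf.mono ((mLt.max measurable_const).mul hf).aestronglyMeasurable
      apply ae_of_all
      intro t
      show ‖M t * f t‖ ≤ ‖(|p| + |c| * |t|) * f t‖
      rw [Real.norm_eq_abs, Real.norm_eq_abs, abs_of_nonneg (mul_nonneg (hM0 t) (hf0 t)),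
        abs_of_nonneg (mul_nonneg (by positivity) (hf0 t))]
      exact mul_le_mul_of_nonneg_right (hMle t) (hf0 t)
    have hMgInt : Integrable (fun t => M t * g t) := by
      apply hdomg.mono ((mLt.max measurable_const).mul hg).aestronglyMeasurable
      apply ae_of_all
      intro t
      show ‖M t * g t‖ ≤ ‖(|p| + |c| * |t|) * g t‖
      rw [Real.norm_eq_abs, Real.norm_eq_abs, abs_of_nonneg (mul_nonneg (hM0 t) (hg0 t)),
        abs_of_nonneg (mul_nonneg (by positivity) (hg0 t))]
      exact mul_le_mul_of_nonneg_right (hMle t) (hg0 t)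
    have hlintf : ∫⁻ t, ENNReal.ofReal (Lt t) * ENNReal.ofReal (f t)
        = ENNReal.ofReal (∫ t, M t * f t) := by
      rw [MeasureTheory.ofReal_integral_eq_lintegral_ofReal hMfInt
        (ae_of_all _ fun t => mul_nonneg (hM0 t) (hf0 t))]
      congr 1
      funext t
      rw [ENNReal.ofReal_mul (hM0 t), ofReal_eq_ofReal_max (Lt t)]
    have hlintg : ∫⁻ t, ENNReal.ofReal (Lt t) * ENNReal.ofReal (g t)
        = ENNReal.ofReal (∫ t, M t * g t) := by
      rw [MeasureTheory.ofReal_integral_eq_lintegral_ofReal hMgInt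
        (ae_of_all _ fun t => mul_nonneg (hM0 t) (hg0 t))]
      congr 1
      funext t
      rw [ENNReal.ofReal_mul (hM0 t), ofReal_eq_ofReal_max (Lt t)]
    -- the real inequality  ∫ M f ≤ ∫ M g
    set N : ℝ → ℝ := fun t => max (-(Lt t)) 0 with hNdef
    have hN0 : ∀ t, 0 ≤ N t := fun t => le_max_right _ _
    have hNle : ∀ t, N t ≤ |p| + |c| * |t| := by
      intro t
      apply max_le
      · show -(p + c * |t|) ≤ |p| + |c| * |t|
        have h2 : -(c * |t|) ≤ |c| * |t| := by
          rw [neg_mul_eq_neg_mul]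
          exact mul_le_mul_of_nonneg_right (neg_le_abs c) (abs_nonneg t)
        linarith [neg_le_abs p]
      · positivity
    have hLtfInt : Integrable (fun t => Lt t * f t) := by
      have he : (fun t => Lt t * f t) = fun t => p * f t + c * (|t| * f t) := by
        funext t; simp only [hLtdef]; ring
      rw [he]
      exact (hfInt.const_mul _).add (hXint.const_mul _)
    have hLtgInt : Integrable (fun t => Lt t * g t) := by
      have he : (fun t => Lt t * g t) = fun t => p * g t + c * (|t| * g t) := by
        funext t; simp only [hLtdef]; ring
      rw [he]
      exact (hgInt.const_mul _).add (hYint.const_mul _)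
    have hNfInt : Integrable (fun t => N t * f t) := by
      apply hdomf.mono (((mLt.neg).max measurable_const).mul hf).aestronglyMeasurable
      apply ae_of_all
      intro t
      show ‖N t * f t‖ ≤ ‖(|p| + |c| * |t|) * f t‖
      rw [Real.norm_eq_abs, Real.norm_eq_abs, abs_of_nonneg (mul_nonneg (hN0 t) (hf0 t)),
        abs_of_nonneg (mul_nonneg (by positivity) (hf0 t))]
      exact mul_le_mul_of_nonneg_right (hNle t) (hf0 t)
    have hNgInt : Integrable (fun t => N t * g t) := by
      apply hdomg.mono (((mLt.neg).max measurable_const).mul hg).aestronglyMeasurable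
      apply ae_of_all
      intro t
      show ‖N t * g t‖ ≤ ‖(|p| + |c| * |t|) * g t‖
      rw [Real.norm_eq_abs, Real.norm_eq_abs, abs_of_nonneg (mul_nonneg (hN0 t) (hg0 t)),
        abs_of_nonneg (mul_nonneg (by positivity) (hg0 t))]
      exact mul_le_mul_of_nonneg_right (hNle t) (hg0 t)
    have hMsplitf : ∫ t, M t * f t = (∫ t, Lt t * f t) + ∫ t, N t * f t := by
      rw [← integral_add hLtfInt hNfInt]
      congr 1
      funext t
      simp only [hMdef, hNdef]
      rw [max_eq_add_max_neg (Lt t)]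
      ring
    have hMsplitg : ∫ t, M t * g t = (∫ t, Lt t * g t) + ∫ t, N t * g t := by
      rw [← integral_add hLtgInt hNgInt]
      congr 1
      funext t
      simp only [hMdef, hNdef]
      rw [max_eq_add_max_neg (Lt t)]
      ring
    have hLteq : ∫ t, Lt t * f t = ∫ t, Lt t * g t := by
      have hef : (fun t => Lt t * f t) = fun t => p * f t + c * (|t| * f t) := by
        funext t; simp only [hLtdef]; ring
      have heg : (fun t => Lt t * g t) = fun t => p * g t + c * (|t| * g t) := by
        funext t; simp only [hLtdef]; ring
      rw [hef, heg, integral_add (hfInt.const_mul _) (hXint.const_mul _),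
        integral_add (hgInt.const_mul _) (hYint.const_mul _),
        integral_const_mul, integral_const_mul, integral_const_mul, integral_const_mul,
        hif, hig, hmom]
    have hNle2 : ∫ t, N t * f t ≤ ∫ t, N t * g t := by
      apply integral_mono hNfInt hNgInt
      intro t
      rcases le_or_gt 0 (Lt t) with hL | hL
      · have : N t = 0 := by
          simp only [hNdef]; rw [max_eq_right (by linarith)]
        simp [this]
      · have hfle : f t ≤ g t := by
          apply crossle
          rintro ⟨h1, h2⟩
          exact absurd (hLnn t h1 h2) (not_le.mpr hL)
        exact mul_le_mul_of_nonneg_left hfle (hN0 t)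
    have hreal : ∫ t, M t * f t ≤ ∫ t, M t * g t := by
      rw [hMsplitf, hMsplitg, hLteq]
      linarith
    -- finish by cancellation
    have hfin : (∫⁻ t, ENNReal.ofReal (Lt t) * ENNReal.ofReal (g t)) ≠ ⊤ := by
      rw [hlintg]; exact ofReal_ne_top
    have hd : (∫⁻ t, ENNReal.ofReal (Lt t) * ENNReal.ofReal (f t))
        ≤ ∫⁻ t, ENNReal.ofReal (Lt t) * ENNReal.ofReal (g t) := by
      rw [hlintf, hlintg]
      exact ENNReal.ofReal_le_ofReal hreal
    have hfinal : (∫⁻ t, φ t * ENNReal.ofReal (f t)) +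
          (∫⁻ t, ENNReal.ofReal (Lt t) * ENNReal.ofReal (g t))
        ≤ (∫⁻ t, φ t * ENNReal.ofReal (g t)) +
          (∫⁻ t, ENNReal.ofReal (Lt t) * ENNReal.ofReal (g t)) :=
      le_trans hle2 (add_le_add_right hd _)
    exact (ENNReal.add_le_add_iff_right hfin).mp hfinal
end

section
/- Dirac-delta behaviour of negative-moment approximation: let k ≥ 1, B the unit ball of a norm ‖·‖ on ℝ^k, and f : ℝ^k → [0,∞) an integrable function continuous at 0. Then lim_{q → −k⁺} ((k+q)/(k·vol_k(B))) ∫_{ℝ^k} ‖x‖^q f(x) dx = f(0). -/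
open MeasureTheory Filter Set Pointwise

namespace NegMomentAux

variable {k : ℕ}

lemma N_nonneg (N : (Fin k → ℝ) → ℝ) (hN0 : ∀ x, N x = 0 ↔ x = 0)
    (hNs : ∀ (c : ℝ) (x), N (c • x) = |c| * N x)
    (hNt : ∀ x y, N (x + y) ≤ N x + N y) (x : Fin k → ℝ) : 0 ≤ N x := by
  have h1 : N (-x) = N x := by
    have := hNs (-1) x
    simpa using this
  have h2 := hNt x (-x)
  simp only [add_neg_cancel, (hN0 0).2 rfl, h1] at h2
  linarith

lemma N_upper (N : (Fin k → ℝ) → ℝ) (hN0 : ∀ x, N x = 0 ↔ x = 0)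
    (hNs : ∀ (c : ℝ) (x), N (c • x) = |c| * N x)
    (hNt : ∀ x y, N (x + y) ≤ N x + N y) :
    ∃ C : ℝ, 0 < C ∧ ∀ x, N x ≤ C * ‖x‖ := by
  refine ⟨(∑ i : Fin k, N (Pi.single i 1)) + 1, ?_, ?_⟩
  · have : 0 ≤ ∑ i : Fin k, N (Pi.single i 1) :=
      Finset.sum_nonneg fun i _ => N_nonneg N hN0 hNs hNt _
    linarith
  · intro x
    set e : Fin k → (Fin k → ℝ) := fun i => Pi.single i 1 with he
    have hx : x = ∑ i : Fin k, (x i) • (e i) := by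
      ext j
      simp [he, Pi.single_apply]
    calc N x = N (∑ i : Fin k, (x i) • (e i)) := by rw [← hx]
      _ ≤ ∑ i : Fin k, N ((x i) • (e i)) :=
          Finset.le_sum_of_subadditive N ((hN0 0).2 rfl).le hNt _ _
      _ = ∑ i : Fin k, |x i| * N (Pi.single i (1:ℝ)) := by simp [hNs, he]
      _ ≤ ∑ i : Fin k, ‖x‖ * N (Pi.single i (1:ℝ)) := by
          refine Finset.sum_le_sum fun i _ => ?_
          exact mul_le_mul_of_nonneg_right
            (by simpa [Real.norm_eq_abs] using norm_le_pi_norm x i)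
            (N_nonneg N hN0 hNs hNt _)
      _ = (∑ i : Fin k, N (Pi.single i 1)) * ‖x‖ := by
          rw [Finset.sum_mul]; exact Finset.sum_congr rfl fun i _ => mul_comm _ _
      _ ≤ ((∑ i : Fin k, N (Pi.single i 1)) + 1) * ‖x‖ := by
          have := norm_nonneg x; nlinarith

lemma N_cont (N : (Fin k → ℝ) → ℝ) (hN0 : ∀ x, N x = 0 ↔ x = 0)
    (hNs : ∀ (c : ℝ) (x), N (c • x) = |c| * N x)
    (hNt : ∀ x y, N (x + y) ≤ N x + N y) : Continuous N := by
  obtain ⟨C, hC, hle⟩ := NegMomentAux.N_upper N hN0 hNs hNt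
  have key : ∀ x y, N x - N y ≤ C * ‖x - y‖ := by
    intro x y
    have := hNt (x - y) y
    rw [sub_add_cancel] at this
    have := hle (x - y)
    linarith
  have : LipschitzWith (Real.toNNReal C) N := by
    apply LipschitzWith.of_dist_le_mul
    intro x y
    rw [Real.dist_eq, dist_eq_norm, Real.coe_toNNReal _ hC.le, abs_sub_le_iff]
    refine ⟨key x y, ?_⟩
    have := key y x
    rwa [show y - x = -(x - y) by ring, norm_neg] at this
  exact this.continuous

lemma N_lower (hk : 1 ≤ k) (N : (Fin k → ℝ) → ℝ) (hN0 : ∀ x, N x = 0 ↔ x = 0)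
    (hNs : ∀ (c : ℝ) (x), N (c • x) = |c| * N x)
    (hNt : ∀ x y, N (x + y) ≤ N x + N y) :
    ∃ m : ℝ, 0 < m ∧ ∀ x, m * ‖x‖ ≤ N x := by
  haveI : Nontrivial (Fin k → ℝ) := by
    refine ⟨Pi.single ⟨0, hk⟩ 1, 0, fun h => ?_⟩
    have := congrFun h ⟨0, hk⟩
    simp [Pi.single_apply] at this
  have hsc : IsCompact (Metric.sphere (0 : Fin k → ℝ) 1) := isCompact_sphere 0 1
  have hsn : (Metric.sphere (0 : Fin k → ℝ) 1).Nonempty :=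
    NormedSpace.sphere_nonempty.2 zero_le_one
  obtain ⟨x₀, hx₀, hmin⟩ := hsc.exists_isMinOn hsn (N_cont N hN0 hNs hNt).continuousOn
  have hx₀n : ‖x₀‖ = 1 := by simpa using hx₀
  have hx₀0 : x₀ ≠ 0 := by intro h; rw [h] at hx₀n; simp at hx₀n
  have hm : 0 < N x₀ := by
    rcases (N_nonneg N hN0 hNs hNt x₀).lt_or_eq with h | h
    · exact h
    · exact absurd ((hN0 x₀).1 h.symm) hx₀0
  refine ⟨N x₀, hm, fun x => ?_⟩
  rcases eq_or_ne x 0 with rfl | hx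
  · simp [(hN0 0).2 rfl]
  · have hnx : (0:ℝ) < ‖x‖ := norm_pos_iff.2 hx
    have hmem : ‖x‖⁻¹ • x ∈ Metric.sphere (0 : Fin k → ℝ) 1 := by
      simp [norm_smul, abs_of_pos (inv_pos.2 hnx), inv_mul_cancel₀ hnx.ne']
    have h3 : N x₀ ≤ N (‖x‖⁻¹ • x) := hmin hmem
    have h2 : N (‖x‖⁻¹ • x) = ‖x‖⁻¹ * N x := by
      rw [hNs]; rw [abs_of_pos (inv_pos.2 hnx)]
    rw [h2] at h3
    calc N x₀ * ‖x‖ ≤ (‖x‖⁻¹ * N x) * ‖x‖ := by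
          exact mul_le_mul_of_nonneg_right h3 hnx.le
      _ = N x := by field_simp

lemma vol_scale (N : (Fin k → ℝ) → ℝ)
    (hNs : ∀ (c : ℝ) (x), N (c • x) = |c| * N x)
    (r : ℝ) (hr : 0 < r) :
    volume {x : Fin k → ℝ | N x ≤ r}
      = ENNReal.ofReal (r ^ k) * volume {x : Fin k → ℝ | N x ≤ 1} := by
  have hset : {x : Fin k → ℝ | N x ≤ r} = r • {x : Fin k → ℝ | N x ≤ 1} := by
    ext x
    rw [mem_smul_set_iff_inv_smul_mem₀ hr.ne']
    simp only [mem_setOf_eq, hNs, abs_inv, abs_of_pos hr]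
    rw [inv_mul_le_iff₀ hr, mul_one]
  rw [hset, Measure.addHaar_smul_of_nonneg volume hr.le, Module.finrank_fin_fun]

lemma key_lintegral (N : (Fin k → ℝ) → ℝ) (hk : 1 ≤ k) (hcont : Continuous N)
    (hN0 : ∀ x, N x = 0 ↔ x = 0) (hNnn : ∀ x, 0 ≤ N x)
    (hvol : ∀ r : ℝ, 0 < r → volume {x : Fin k → ℝ | N x ≤ r}
      = ENNReal.ofReal (r ^ k) * volume {x : Fin k → ℝ | N x ≤ 1})
    (δ q : ℝ) (hδ : 0 < δ) (hq1 : -(k : ℝ) < q) (hq2 : q < 0) :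
    ∫⁻ x in {x : Fin k → ℝ | N x ≤ δ}, ENNReal.ofReal (N x ^ q)
      = ENNReal.ofReal (δ ^ ((k : ℝ) + q) * ((k : ℝ) / ((k : ℝ) + q)))
          * volume {x : Fin k → ℝ | N x ≤ 1} := by
  haveI : Nonempty (Fin k) := ⟨⟨0, hk⟩⟩
  have hkq : 0 < (k : ℝ) + q := by linarith
  set V := volume {x : Fin k → ℝ | N x ≤ 1} with hV
  have hA : MeasurableSet {x : Fin k → ℝ | N x ≤ δ} :=
    (isClosed_le hcont continuous_const).measurableSet
  have hmeas : Measurable fun x => N x ^ q := by fun_prop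
  rw [lintegral_eq_lintegral_meas_le _
    (ae_of_all _ fun x => Real.rpow_nonneg (hNnn x) q) hmeas.aemeasurable]
  have hsets : ∀ t ∈ Ioi (0:ℝ),
      (volume.restrict {x : Fin k → ℝ | N x ≤ δ}) {x | t ≤ N x ^ q}
        = ENNReal.ofReal ((min δ (t ^ q⁻¹)) ^ k) * V := by
    intro t ht
    rw [Measure.restrict_apply' hA]
    have hEq : {x : Fin k → ℝ | t ≤ N x ^ q} ∩ {x : Fin k → ℝ | N x ≤ δ}
        = {x : Fin k → ℝ | N x ≤ min δ (t ^ q⁻¹)} \ {0} := by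
      ext x
      rcases eq_or_ne x 0 with rfl | hx
      · simp only [mem_inter_iff, mem_setOf_eq, mem_diff, mem_singleton_iff,
          (hN0 0).2 rfl, Real.zero_rpow hq2.ne]
        simp [not_le.2 (mem_Ioi.1 ht)]
      · have hNx : 0 < N x :=
          lt_of_le_of_ne (hNnn x) (fun h => hx ((hN0 x).1 h.symm))
        simp only [mem_inter_iff, mem_setOf_eq, mem_diff, mem_singleton_iff, le_min_iff]
        have hiff := Real.le_rpow_inv_iff_of_neg hNx ht hq2
        constructor
        · rintro ⟨h1, h2⟩; exact ⟨⟨h2, hiff.2 h1⟩, hx⟩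
        · rintro ⟨⟨h2, h3⟩, -⟩; exact ⟨hiff.1 h3, h2⟩
    rw [hEq, measure_diff_null (measure_singleton 0),
      hvol _ (lt_min hδ (Real.rpow_pos_of_pos ht q⁻¹))]
  rw [setLIntegral_congr_fun measurableSet_Ioi hsets]
  have hc : 0 < δ ^ q := Real.rpow_pos_of_pos hδ q
  have hsplit : Ioi (0:ℝ) = Ioc 0 (δ ^ q) ∪ Ioi (δ ^ q) :=
    (Ioc_union_Ioi_eq_Ioi hc.le).symm
  rw [hsplit, lintegral_union measurableSet_Ioi Ioc_disjoint_Ioi_same]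
  have hp : q⁻¹ * (k : ℝ) < -1 := by
    rw [mul_comm, ← div_eq_mul_inv, div_lt_iff_of_neg hq2]
    linarith
  have h1 : ∫⁻ t in Ioc 0 (δ ^ q), ENNReal.ofReal ((min δ (t ^ q⁻¹)) ^ k) * V
      = (ENNReal.ofReal (δ ^ k) * V) * ENNReal.ofReal (δ ^ q) := by
    have hcong : ∀ t ∈ Ioc (0:ℝ) (δ ^ q),
        ENNReal.ofReal ((min δ (t ^ q⁻¹)) ^ k) * V = ENNReal.ofReal (δ ^ k) * V := by
      intro t ht
      have hmin : min δ (t ^ q⁻¹) = δ :=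
        min_eq_left ((Real.le_rpow_inv_iff_of_neg hδ ht.1 hq2).2 ht.2)
      rw [hmin]
    rw [setLIntegral_congr_fun measurableSet_Ioc hcong,
      setLIntegral_const, Real.volume_Ioc, sub_zero]
  have h2 : ∫⁻ t in Ioi (δ ^ q), ENNReal.ofReal ((min δ (t ^ q⁻¹)) ^ k) * V
      = ENNReal.ofReal (-(δ ^ q) ^ (q⁻¹ * (k:ℝ) + 1) / (q⁻¹ * (k:ℝ) + 1)) * V := by
    have hcong : ∀ t ∈ Ioi (δ ^ q),
        ENNReal.ofReal ((min δ (t ^ q⁻¹)) ^ k) * V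
          = ENNReal.ofReal (t ^ (q⁻¹ * (k:ℝ))) * V := by
      intro t ht
      have htpos : (0:ℝ) < t := hc.trans ht
      have hmin : min δ (t ^ q⁻¹) = t ^ q⁻¹ :=
        min_eq_right ((Real.rpow_inv_le_iff_of_neg htpos hδ hq2).2 (le_of_lt ht))
      rw [hmin, ← Real.rpow_natCast (t ^ q⁻¹) k, ← Real.rpow_mul htpos.le]
    rw [setLIntegral_congr_fun measurableSet_Ioi hcong]
    rw [lintegral_mul_const _ (by fun_prop)]
    congr 1
    rw [← ofReal_integral_eq_lintegral_ofReal
      (integrableOn_Ioi_rpow_of_lt hp hc)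
      ((ae_restrict_mem measurableSet_Ioi).mono fun t ht =>
        Real.rpow_nonneg (hc.trans ht).le _)]
    rw [integral_Ioi_rpow_of_lt hp hc]
  rw [h1, h2]
  have e1 : (δ ^ q) ^ (q⁻¹ * (k:ℝ) + 1) = δ ^ ((k:ℝ) + q) := by
    rw [← Real.rpow_mul hδ.le]
    congr 1
    linear_combination (k:ℝ) * mul_inv_cancel₀ hq2.ne
  have e2 : δ ^ k * δ ^ q = δ ^ ((k:ℝ) + q) := by
    rw [← Real.rpow_natCast δ k, ← Real.rpow_add hδ]
  rw [e1]
  rw [mul_right_comm, ← ENNReal.ofReal_mul (by positivity), e2, ← add_mul,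
    ← ENNReal.ofReal_add (by positivity) ?_]
  · congr 1
    have hd : q⁻¹ * (k:ℝ) + 1 = ((k:ℝ) + q) / q := by
      rw [eq_div_iff hq2.ne]
      linear_combination (k:ℝ) * inv_mul_cancel₀ hq2.ne
    rw [hd]
    field_simp
    ring
  · have hd : q⁻¹ * (k:ℝ) + 1 < 0 := by linarith
    exact div_nonneg_iff.2 (Or.inr ⟨neg_nonpos.2 (by positivity), hd.le⟩)

lemma key_integral (N : (Fin k → ℝ) → ℝ) (hk : 1 ≤ k) (hcont : Continuous N)
    (hN0 : ∀ x, N x = 0 ↔ x = 0) (hNnn : ∀ x, 0 ≤ N x)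
    (hvol : ∀ r : ℝ, 0 < r → volume {x : Fin k → ℝ | N x ≤ r}
      = ENNReal.ofReal (r ^ k) * volume {x : Fin k → ℝ | N x ≤ 1})
    (hVlt : volume {x : Fin k → ℝ | N x ≤ 1} < ⊤)
    (δ q : ℝ) (hδ : 0 < δ) (hq1 : -(k : ℝ) < q) (hq2 : q < 0) :
    IntegrableOn (fun x => N x ^ q) {x : Fin k → ℝ | N x ≤ δ} ∧
    ∫ x in {x : Fin k → ℝ | N x ≤ δ}, N x ^ q
      = δ ^ ((k : ℝ) + q) * ((k : ℝ) / ((k : ℝ) + q))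
          * (volume {x : Fin k → ℝ | N x ≤ 1}).toReal := by
  have hkq : 0 < (k : ℝ) + q := by linarith
  have hmeas : Measurable fun x => N x ^ q := by fun_prop
  have hnn : 0 ≤ᵐ[volume.restrict {x : Fin k → ℝ | N x ≤ δ}]
      fun x => N x ^ q := ae_of_all _ fun x => Real.rpow_nonneg (hNnn x) q
  have hlint := key_lintegral N hk hcont hN0 hNnn hvol δ q hδ hq1 hq2
  constructor
  · refine ⟨hmeas.aestronglyMeasurable.restrict, ?_⟩
    rw [hasFiniteIntegral_iff_ofReal hnn, hlint]
    exact ENNReal.mul_lt_top ENNReal.ofReal_lt_top hVlt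
  · rw [integral_eq_lintegral_of_nonneg_ae hnn hmeas.aestronglyMeasurable.restrict,
      hlint, ENNReal.toReal_mul, ENNReal.toReal_ofReal (by positivity)]

end NegMomentAux

/-- Dirac-delta behaviour of the negative-moment approximation: for a norm
`N` on `ℝ^k` with unit ball `B` and an integrable `f : ℝ^k → [0,∞)` continuous
at `0`, `((k+q)/(k·vol(B))) ∫ N(x)^q f(x) dx → f 0` as `q → −k⁺`. -/
theorem negative_moment_dirac_limit
    (k : ℕ) (hk : 1 ≤ k) (N : (Fin k → ℝ) → ℝ)
    (hN0 : ∀ x, N x = 0 ↔ x = 0)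
    (hNs : ∀ (c : ℝ) (x), N (c • x) = |c| * N x)
    (hNt : ∀ x y, N (x + y) ≤ N x + N y)
    (f : (Fin k → ℝ) → ℝ) (hf0 : ∀ x, 0 ≤ f x)
    (hfi : Integrable f) (hfc : ContinuousAt f 0) :
    Tendsto
      (fun q : ℝ =>
        ((k + q) / (k * (volume {x : Fin k → ℝ | N x ≤ 1}).toReal)) *
          ∫ x : Fin k → ℝ, N x ^ q * f x)
      (nhdsWithin (-(k : ℝ)) (Set.Ioi (-(k : ℝ)))) (nhds (f 0)) := by
  have hNnn := NegMomentAux.N_nonneg N hN0 hNs hNt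
  have hcont := NegMomentAux.N_cont N hN0 hNs hNt
  obtain ⟨C, hC, hCle⟩ := NegMomentAux.N_upper N hN0 hNs hNt
  obtain ⟨m, hm, hmle⟩ := NegMomentAux.N_lower hk N hN0 hNs hNt
  have hvol : ∀ r : ℝ, 0 < r → volume {x : Fin k → ℝ | N x ≤ r}
      = ENNReal.ofReal (r ^ k) * volume {x : Fin k → ℝ | N x ≤ 1} :=
    fun r hr => NegMomentAux.vol_scale N hNs r hr
  have hk0 : (0:ℝ) < k := by exact_mod_cast hk
  have hVpos : 0 < volume {x : Fin k → ℝ | N x ≤ 1} := by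
    refine lt_of_lt_of_le (Metric.measure_ball_pos volume 0 (inv_pos.2 hC)) (measure_mono ?_)
    intro x hx
    simp only [Metric.mem_ball, dist_zero_right] at hx
    have := hCle x
    simp only [mem_setOf_eq]
    nlinarith [mul_lt_mul_of_pos_left hx hC, mul_inv_cancel₀ hC.ne']
  have hVlt : volume {x : Fin k → ℝ | N x ≤ 1} < ⊤ := by
    refine lt_of_le_of_lt (measure_mono (fun x hx => ?_))
      (measure_closedBall_lt_top (x := (0 : Fin k → ℝ)) (r := m⁻¹))
    simp only [mem_setOf_eq] at hx
    have := hmle x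
    simp only [Metric.mem_closedBall, dist_zero_right]
    rw [← one_div, le_div_iff₀ hm]
    nlinarith
  set V := (volume {x : Fin k → ℝ | N x ≤ 1}).toReal with hVdef
  have hV0 : 0 < V := ENNReal.toReal_pos hVpos.ne' hVlt.ne
  rw [Metric.tendsto_nhds]
  intro ε hε
  obtain ⟨δ₀, hδ₀, hfδ⟩ := Metric.continuousAt_iff.1 hfc (ε/4) (by positivity)
  set δ : ℝ := m * δ₀ / 2 with hδdef
  have hδ : 0 < δ := by positivity
  have hfd : ∀ x : Fin k → ℝ, N x ≤ δ → |f x - f 0| ≤ ε/4 := by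
    intro x hx
    have h1 := hmle x
    have h2 : ‖x‖ < δ₀ := by nlinarith
    have h3 := hfδ (show dist x 0 < δ₀ by simpa [dist_zero_right] using h2)
    rw [Real.dist_eq] at h3
    exact h3.le
  have hA : MeasurableSet {x : Fin k → ℝ | N x ≤ δ} :=
    (isClosed_le hcont continuous_const).measurableSet
  have hbound : ∀ q : ℝ, -(k:ℝ) < q → q < 0 →
      |((k + q) / (k * V)) * (∫ x : Fin k → ℝ, N x ^ q * f x) - f 0|
        ≤ (ε/4) * δ ^ ((k:ℝ) + q) + |f 0| * |δ ^ ((k:ℝ)+q) - 1|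
          + (((k:ℝ)+q)/((k:ℝ)*V)) * (δ ^ q * ∫ x : Fin k → ℝ, f x) := by
    intro q hq1 hq2
    have hkq : 0 < (k:ℝ) + q := by linarith
    obtain ⟨hSint, hSval⟩ :=
      NegMomentAux.key_integral N hk hcont hN0 hNnn hvol hVlt δ q hδ hq1 hq2
    set S : ℝ := ∫ x in {x : Fin k → ℝ | N x ≤ δ}, N x ^ q with hSdef
    have hSnn : 0 ≤ S :=
      setIntegral_nonneg hA fun x _ => Real.rpow_nonneg (hNnn x) q
    have hc : 0 < ((k:ℝ)+q)/((k:ℝ)*V) := by positivity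
    have hcS : (((k:ℝ)+q)/((k:ℝ)*V)) * S = δ ^ ((k:ℝ)+q) := by
      rw [hSval, ← hVdef]
      field_simp
    have hmeasq : Measurable fun x : Fin k → ℝ => N x ^ q := by fun_prop
    have hfm : AEStronglyMeasurable (fun x : Fin k → ℝ => N x ^ q * f x) volume :=
      hmeasq.aestronglyMeasurable.mul hfi.aestronglyMeasurable
    have int1 : IntegrableOn (fun x : Fin k → ℝ => N x ^ q * f x)
        {x : Fin k → ℝ | N x ≤ δ} := by
      refine Integrable.mono (hSint.const_mul (f 0 + ε/4)) hfm.restrict ?_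
      filter_upwards [ae_restrict_mem hA] with x hx
      have h1 := hfd x hx
      have h2 : 0 ≤ N x ^ q := Real.rpow_nonneg (hNnn x) q
      have h3 : |f x| ≤ f 0 + ε/4 := by
        rw [abs_of_nonneg (hf0 x)]
        have := (abs_le.1 h1).2
        linarith
      rw [Real.norm_eq_abs, Real.norm_eq_abs, abs_mul, abs_of_nonneg h2,
        abs_of_nonneg (mul_nonneg (by linarith [hf0 0, hε.le]) h2)]
      calc N x ^ q * |f x| ≤ N x ^ q * (f 0 + ε/4) :=
            mul_le_mul_of_nonneg_left h3 h2
        _ = (f 0 + ε/4) * N x ^ q := mul_comm _ _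
    have hcompl : ∀ᵐ x ∂(volume.restrict {x : Fin k → ℝ | N x ≤ δ}ᶜ),
        N x ^ q * f x ≤ δ ^ q * f x := by
      filter_upwards [ae_restrict_mem hA.compl] with x hx
      have hxδ : δ < N x := not_le.1 hx
      have hNx : 0 < N x := hδ.trans hxδ
      have h2 : N x ^ q ≤ δ ^ q :=
        (Real.rpow_le_rpow_iff_of_neg hNx hδ hq2).2 hxδ.le
      exact mul_le_mul_of_nonneg_right h2 (hf0 x)
    have int2 : IntegrableOn (fun x : Fin k → ℝ => N x ^ q * f x)
        {x : Fin k → ℝ | N x ≤ δ}ᶜ := by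
      refine Integrable.mono ((hfi.const_mul (δ ^ q)).integrableOn) hfm.restrict ?_
      filter_upwards [hcompl] with x hx
      rw [Real.norm_eq_abs, Real.norm_eq_abs,
        abs_of_nonneg (mul_nonneg (Real.rpow_nonneg (hNnn x) q) (hf0 x)),
        abs_of_nonneg (mul_nonneg (Real.rpow_nonneg hδ.le q) (hf0 x))]
      exact hx
    have inttot : Integrable (fun x : Fin k → ℝ => N x ^ q * f x) := by
      have h := int1.union int2
      rwa [Set.union_compl_self, integrableOn_univ] at h
    have hsplit : (∫ x : Fin k → ℝ, N x ^ q * f x)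
        = (∫ x in {x : Fin k → ℝ | N x ≤ δ}, N x ^ q * f x)
          + (∫ x in {x : Fin k → ℝ | N x ≤ δ}ᶜ, N x ^ q * f x) :=
      (integral_add_compl hA inttot).symm
    have hE1 : |(∫ x in {x : Fin k → ℝ | N x ≤ δ}, N x ^ q * f x) - f 0 * S|
        ≤ (ε/4) * S := by
      have heq : (∫ x in {x : Fin k → ℝ | N x ≤ δ}, N x ^ q * f x) - f 0 * S
          = ∫ x in {x : Fin k → ℝ | N x ≤ δ}, (N x ^ q * f x - f 0 * N x ^ q) := by
        rw [integral_sub int1 (hSint.const_mul (f 0)), integral_const_mul]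
      rw [heq]
      have hb : ∀ᵐ x ∂(volume.restrict {x : Fin k → ℝ | N x ≤ δ}),
          ‖N x ^ q * f x - f 0 * N x ^ q‖ ≤ (fun x => (ε/4) * N x ^ q) x := by
        filter_upwards [ae_restrict_mem hA] with x hx
        have h2 : 0 ≤ N x ^ q := Real.rpow_nonneg (hNnn x) q
        rw [show N x ^ q * f x - f 0 * N x ^ q = N x ^ q * (f x - f 0) by ring,
          Real.norm_eq_abs, abs_mul, abs_of_nonneg h2]
        calc N x ^ q * |f x - f 0| ≤ N x ^ q * (ε/4) :=
              mul_le_mul_of_nonneg_left (hfd x hx) h2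
          _ = (ε/4) * N x ^ q := mul_comm _ _
      have := norm_integral_le_of_norm_le (hSint.const_mul (ε/4)) hb
      rwa [Real.norm_eq_abs, integral_const_mul] at this
    set T : ℝ := ∫ x in {x : Fin k → ℝ | N x ≤ δ}ᶜ, N x ^ q * f x with hTdef
    have hT1 : 0 ≤ T :=
      setIntegral_nonneg hA.compl fun x _ =>
        mul_nonneg (Real.rpow_nonneg (hNnn x) q) (hf0 x)
    have hT2 : T ≤ δ ^ q * ∫ x : Fin k → ℝ, f x := by
      calc T ≤ ∫ x in {x : Fin k → ℝ | N x ≤ δ}ᶜ, δ ^ q * f x :=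
            integral_mono_ae int2 ((hfi.const_mul _).integrableOn) hcompl
        _ = δ ^ q * ∫ x in {x : Fin k → ℝ | N x ≤ δ}ᶜ, f x := integral_const_mul _ _
        _ ≤ δ ^ q * ∫ x : Fin k → ℝ, f x :=
            mul_le_mul_of_nonneg_left
              (setIntegral_le_integral hfi (ae_of_all _ hf0))
              (Real.rpow_nonneg hδ.le q)
    have hdecomp : ((k + q) / (k * V)) * (∫ x : Fin k → ℝ, N x ^ q * f x) - f 0
        = (((k:ℝ)+q)/((k:ℝ)*V)) * ((∫ x in {x : Fin k → ℝ | N x ≤ δ}, N x ^ q * f x) - f 0 * S)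
          + f 0 * ((((k:ℝ)+q)/((k:ℝ)*V)) * S - 1)
          + (((k:ℝ)+q)/((k:ℝ)*V)) * T := by
      rw [hsplit]; push_cast; ring
    rw [hdecomp]
    calc |(((k:ℝ)+q)/((k:ℝ)*V)) * ((∫ x in {x : Fin k → ℝ | N x ≤ δ}, N x ^ q * f x) - f 0 * S)
          + f 0 * ((((k:ℝ)+q)/((k:ℝ)*V)) * S - 1)
          + (((k:ℝ)+q)/((k:ℝ)*V)) * T|
        ≤ |(((k:ℝ)+q)/((k:ℝ)*V)) * ((∫ x in {x : Fin k → ℝ | N x ≤ δ}, N x ^ q * f x) - f 0 * S)|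
          + |f 0 * ((((k:ℝ)+q)/((k:ℝ)*V)) * S - 1)|
          + |(((k:ℝ)+q)/((k:ℝ)*V)) * T| := abs_add_three _ _ _
      _ ≤ (ε/4) * δ ^ ((k:ℝ) + q) + |f 0| * |δ ^ ((k:ℝ)+q) - 1|
          + (((k:ℝ)+q)/((k:ℝ)*V)) * (δ ^ q * ∫ x : Fin k → ℝ, f x) := by
          gcongr ?_ + ?_ + ?_
          · rw [abs_mul, abs_of_pos hc]
            calc (((k:ℝ)+q)/((k:ℝ)*V))
                  * |(∫ x in {x : Fin k → ℝ | N x ≤ δ}, N x ^ q * f x) - f 0 * S|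
                ≤ (((k:ℝ)+q)/((k:ℝ)*V)) * ((ε/4) * S) :=
                  mul_le_mul_of_nonneg_left hE1 hc.le
              _ = (ε/4) * ((((k:ℝ)+q)/((k:ℝ)*V)) * S) := by ring
              _ = (ε/4) * δ ^ ((k:ℝ) + q) := by rw [hcS]
          · rw [abs_mul, hcS]
          · rw [abs_mul, abs_of_pos hc, abs_of_nonneg hT1]
            exact mul_le_mul_of_nonneg_left hT2 hc.le
  have hc1 : ContinuousAt (fun q : ℝ => δ ^ ((k:ℝ) + q)) (-(k:ℝ)) :=
    (Real.continuousAt_const_rpow hδ.ne').comp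
      ((continuous_const.add continuous_id).continuousAt)
  have hc2 : ContinuousAt (fun q : ℝ => δ ^ q) (-(k:ℝ)) :=
    Real.continuousAt_const_rpow hδ.ne'
  have hcb : ContinuousAt (fun q : ℝ =>
      (ε/4) * δ ^ ((k:ℝ) + q) + |f 0| * |δ ^ ((k:ℝ)+q) - 1|
        + (((k:ℝ)+q)/((k:ℝ)*V)) * (δ ^ q * ∫ x : Fin k → ℝ, f x)) (-(k:ℝ)) := by
    refine ContinuousAt.add (ContinuousAt.add ?_ ?_) ?_
    · exact continuousAt_const.mul hc1
    · exact continuousAt_const.mul ((hc1.sub continuousAt_const).abs)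
    · exact ((continuousAt_const.add continuousAt_id).div continuousAt_const
        (by positivity)).mul (hc2.mul continuousAt_const)
  have hval : (ε/4) * δ ^ ((k:ℝ) + -(k:ℝ)) + |f 0| * |δ ^ ((k:ℝ) + -(k:ℝ)) - 1|
      + (((k:ℝ) + -(k:ℝ))/((k:ℝ)*V)) * (δ ^ (-(k:ℝ)) * ∫ x : Fin k → ℝ, f x) = ε/4 := by
    rw [add_neg_cancel, Real.rpow_zero]
    simp
  have hev1 : ∀ᶠ q in nhdsWithin (-(k:ℝ)) (Set.Ioi (-(k:ℝ))),
      (ε/4) * δ ^ ((k:ℝ) + q) + |f 0| * |δ ^ ((k:ℝ)+q) - 1|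
        + (((k:ℝ)+q)/((k:ℝ)*V)) * (δ ^ q * ∫ x : Fin k → ℝ, f x) < ε := by
    have ht := hcb.tendsto.mono_left (nhdsWithin_le_nhds (s := Set.Ioi (-(k:ℝ))))
    rw [hval] at ht
    exact ht.eventually_lt_const (by linarith)
  have hev3 : ∀ᶠ q in nhdsWithin (-(k:ℝ)) (Set.Ioi (-(k:ℝ))), q < 0 :=
    (eventually_lt_nhds (by linarith : -(k:ℝ) < 0)).filter_mono nhdsWithin_le_nhds
  filter_upwards [hev1, self_mem_nhdsWithin, hev3] with q h1 h2 h3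
  rw [Real.dist_eq]
  exact lt_of_le_of_lt (hbound q (mem_Ioi.1 h2) h3) h1
end
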